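/- arXiv:1907.01464 — 2 statements merged into one kernel-verified Lean document; each statement's English description precedes it below -/
import Mathlib

section
/- Let L be a PCE language with eventually periodic signature whose periodic rhythm has directing parameter (q,p), p > q ≥ 1. Then the carry propagation CP(L) = lim_{N→∞} (1/N) ∑_{i=0}^{N−1} cp_L(i) exists and equals p/(p−q). -/
open Filter Topology

/-- Length of the longest common prefix of two words. -/
def lcpLen {A : Type*} [DecidableEq A] : List A → List A → ℕ
  | a :: u, b :: v => if a = b then lcpLen u v + 1 else 0
  | _, _ => 0

/-- `Delta u v`: if `|u| = |v|`, the length of `u` minus the length of the longest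
common prefix of `u` and `v`; otherwise `max |u| |v|` (padding convention). -/
def Delta {A : Type*} [DecidableEq A] (u v : List A) : ℕ :=
  if u.length = v.length then u.length - lcpLen u v else max u.length v.length

/-- Radix (genealogical) order: shorter words first, words of equal length
compared lexicographically. -/
def RadixLt {A : Type*} [LT A] (u v : List A) : Prop :=
  u.length < v.length ∨ (u.length = v.length ∧ List.Lex (· < ·) u v)

/-- A language is PCE if it is prefix-closed and right-extendable. -/
def PCE {A : Type*} (L : Set (List A)) : Prop :=
  (∀ w ∈ L, ∀ u, u <+: w → u ∈ L) ∧ (∀ w ∈ L, ∃ v ∈ L, w <+: v ∧ w ≠ v)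

/-- `rep` enumerates `L` in radix order: it is a bijection from `ℕ` onto `L`
which is strictly increasing for the radix order, so `rep n` is the `(n+1)`-th
word of `L` (the `L`-representation of `n`). -/
def RadixEnum {A : Type*} [LT A] (L : Set (List A)) (rep : ℕ → List A) : Prop :=
  Set.BijOn rep Set.univ L ∧ ∀ m n : ℕ, m < n → RadixLt (rep m) (rep n)

/-- Number of words of `L` of length `ℓ`. -/
noncomputable def uCount {A : Type*} (L : Set (List A)) (ℓ : ℕ) : ℕ :=
  {w ∈ L | w.length = ℓ}.ncard

/-- Number of words of `L` of length at most `ℓ`. -/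
noncomputable def vCount {A : Type*} (L : Set (List A)) (ℓ : ℕ) : ℕ :=
  {w ∈ L | w.length ≤ ℓ}.ncard

/-- The left bank of a word `v`: words of `L` of length at most `|v|` that are
lexicographically smaller than `v`, excluding the prefixes of `v`. -/
def leftBank {A : Type*} [LT A] (L : Set (List A)) (v : List A) : Set (List A) :=
  {w ∈ L | w.length ≤ v.length ∧ List.Lex (· < ·) w v} \ {w | w <+: v}

/-- Degree of the node `w` in the language tree of `L`: the number of letters
`a` with `w·a ∈ L`. -/
noncomputable def nodeDeg {A : Type*} (L : Set (List A)) (w : List A) : ℕ :=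
  {a : A | w ++ [a] ∈ L}.ncard

/-- The signature of `L` (with radix enumeration `rep`): the sequence of degrees
of the nodes in breadth-first (radix) order, the root counting itself as an
extra child (i-tree convention). -/
noncomputable def signature {A : Type*} (L : Set (List A)) (rep : ℕ → List A) (n : ℕ) : ℕ :=
  nodeDeg L (rep n) + if n = 0 then 1 else 0

namespace CarryAux
set_option linter.unusedSectionVars false

lemma not_lex_nil {A : Type*} {r : A → A → Prop} {l : List A} : ¬ List.Lex r l [] := by
  intro h; cases h

lemma take_of_prefix {A : Type*} {z v : List A} (h : z <+: v) : v.take z.length = z :=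
  (List.prefix_iff_eq_take.mp h).symm

lemma take_append_eq {A : Type*} {w : List A} {a : A} {ℓ : ℕ} (h : w.length = ℓ) :
    (w ++ [a]).take ℓ = w := by
  subst h
  exact List.take_left

section L0
variable {A : Type*} [LinearOrder A]

lemma lcpLen_le_left : ∀ u v : List A, lcpLen u v ≤ u.length
  | a :: u, b :: v => by
    simp only [lcpLen]
    split
    · simpa using lcpLen_le_left u v
    · simp
  | [], v => by cases v <;> simp [lcpLen]
  | a :: u, [] => by simp [lcpLen]

lemma take_eq_take_iff_lcp : ∀ (u v : List A), u ≠ v → ∀ k,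
    (u.take k = v.take k ↔ k ≤ lcpLen u v)
  | [], [], h, k => absurd rfl h
  | [], b :: v, h, k => by
    cases k <;> simp [lcpLen]
  | a :: u, [], h, k => by
    cases k <;> simp [lcpLen]
  | a :: u, b :: v, h, k => by
    cases k with
    | zero => simp
    | succ k =>
      rcases eq_or_ne a b with rfl | hab
      · have hu : u ≠ v := by rintro rfl; exact h rfl
        simp [lcpLen, take_eq_take_iff_lcp u v hu k]
      · simp [lcpLen, hab]

lemma lex_take : ∀ (k : ℕ) (u v : List A),
    List.Lex (· < ·) (u.take k) (v.take k) → List.Lex (· < ·) u v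
  | 0, u, v => by simp
  | k + 1, [], v => by
    cases v with
    | nil => simp
    | cons b v => intro _; exact List.Lex.nil
  | k + 1, a :: u, [] => by intro h; cases h
  | k + 1, a :: u, b :: v => by
    intro h
    simp only [List.take_succ_cons] at h
    cases h with
    | rel hab => exact List.Lex.rel hab
    | cons h => exact List.Lex.cons (lex_take k u v h)

lemma lex_append_single {w : List A} {a b : A} (h : a < b) :
    List.Lex (· < ·) (w ++ [a]) (w ++ [b]) := by
  induction w with
  | nil => exact List.Lex.rel h
  | cons c w ih => exact List.Lex.cons ih

lemma lt_of_lex_append_single {w : List A} {a b : A}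
    (h : List.Lex (· < ·) (w ++ [a]) (w ++ [b])) : a < b := by
  induction w with
  | nil =>
    cases h with
    | rel hab => exact hab
    | cons h => cases h
  | cons c w ih =>
    cases h with
    | rel hab => exact absurd rfl hab.ne
    | cons h => exact ih h

lemma lex_trichot (u v : List A) : List.Lex (· < ·) u v ∨ u = v ∨ List.Lex (· < ·) v u :=
  trichotomous u v

lemma lex_asymm {u v : List A} (h : List.Lex (· < ·) u v) (h' : List.Lex (· < ·) v u) : False :=
  asymm h h'

lemma Delta_eq_of_len_eq {u v : List A} (h : u.length = v.length) :
    Delta u v = u.length - lcpLen u v := if_pos h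

lemma Delta_eq_of_len_ne {u v : List A} (h : u.length ≠ v.length) :
    Delta u v = max u.length v.length := if_neg h


end L0

section Enum
variable {A : Type*} [Fintype A] [LinearOrder A]
variable {L : Set (List A)} {rep : ℕ → List A}
variable (hL : PCE L) (hrep : RadixEnum L rep)
include hL hrep

lemma rep_mem (n : ℕ) : rep n ∈ L := hrep.1.1 (Set.mem_univ n)

lemma rep_inj : Function.Injective rep := fun a b h =>
  hrep.1.2.1 (Set.mem_univ a) (Set.mem_univ b) h

lemma rep_surj {w : List A} (hw : w ∈ L) : ∃ n, rep n = w := by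
  obtain ⟨n, -, hn⟩ := hrep.1.2.2 hw
  exact ⟨n, hn⟩

lemma radix_asymm {u v : List A} (h : RadixLt u v) (h' : RadixLt v u) : False := by
  rcases h with h | ⟨he, h⟩ <;> rcases h' with h' | ⟨he', h'⟩
  · exact absurd h' (lt_asymm h)
  · omega
  · omega
  · exact asymm h h'

lemma rep_lt_iff {m n : ℕ} : m < n ↔ RadixLt (rep m) (rep n) := by
  constructor
  · exact hrep.2 m n
  · intro h
    rcases lt_trichotomy m n with h' | rfl | h'
    · exact h'
    · exact absurd h (fun hh => radix_asymm hL hrep hh hh)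
    · exact absurd (hrep.2 n m h') (fun hh => radix_asymm hL hrep h hh)

lemma len_mono {m n : ℕ} (h : m ≤ n) : (rep m).length ≤ (rep n).length := by
  rcases eq_or_lt_of_le h with rfl | h
  · exact le_refl _
  · rcases hrep.2 m n h with h' | ⟨h', -⟩
    · exact h'.le
    · exact h'.le

lemma nil_mem : [] ∈ L := hL.1 _ (rep_mem hL hrep 0) [] (List.nil_prefix)

lemma rep_zero : rep 0 = [] := by
  obtain ⟨k, hk⟩ := rep_surj hL hrep (nil_mem hL hrep)
  rcases Nat.eq_zero_or_pos k with rfl | hpos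
  · exact hk
  · exfalso
    rcases hrep.2 0 k hpos with h | ⟨h, hlex⟩
    · rw [hk] at h; simp at h
    · rw [hk] at hlex; exact not_lex_nil hlex

lemma exists_ext {w : List A} (hw : w ∈ L) :
    ∀ ℓ, w.length ≤ ℓ → ∃ v ∈ L, w <+: v ∧ v.length = ℓ := by
  intro ℓ hℓ
  induction ℓ with
  | zero =>
    refine ⟨w, hw, List.prefix_refl w, ?_⟩; omega
  | succ ℓ ih =>
    rcases Nat.lt_or_ge w.length (ℓ+1) with hlt | hge
    · obtain ⟨v, hv, hpre, hlen⟩ := ih (by omega)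
      obtain ⟨v', hv', hpre', hne⟩ := hL.2 v hv
      refine ⟨v'.take (ℓ+1), hL.1 _ hv' _ (List.take_prefix _ _), ?_, ?_⟩
      · have h1 : v <+: v' := hpre'
        have hvlt : v.length < v'.length :=
          lt_of_le_of_ne h1.length_le (fun he => hne (h1.eq_of_length he))
        have hveq : v = v'.take ℓ := by
          conv_lhs => rw [List.prefix_iff_eq_take.mp h1, hlen]
        calc w <+: v := hpre
          _ <+: v'.take (ℓ+1) := by
            rw [hveq, show v'.take ℓ = (v'.take (ℓ+1)).take ℓ by
              rw [List.take_take]; congr 1; omega]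
            exact List.take_prefix _ _
      · rw [List.length_take]
        have h1 : v <+: v' := hpre'
        have : v.length < v'.length :=
          lt_of_le_of_ne h1.length_le (fun he => hne (h1.eq_of_length he))
        omega
    · refine ⟨w, hw, List.prefix_refl w, by omega⟩

lemma exists_len (ℓ : ℕ) : ∃ n, (rep n).length = ℓ := by
  obtain ⟨v, hv, -, hlen⟩ := exists_ext hL hrep (nil_mem hL hrep) ℓ (by simp)
  obtain ⟨n, rfl⟩ := rep_surj hL hrep hv
  exact ⟨n, hlen⟩

lemma len_succ_le (n : ℕ) : (rep (n+1)).length ≤ (rep n).length + 1 := by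
  by_contra h
  push_neg at h
  obtain ⟨k, hk⟩ := exists_len hL hrep ((rep n).length + 1)
  rcases le_or_gt k n with hle | hlt
  · have := len_mono hL hrep hle; omega
  · have := len_mono hL hrep (show n+1 ≤ k by omega); omega

lemma len_le_self (n : ℕ) : (rep n).length ≤ n := by
  induction n with
  | zero => simp [rep_zero hL hrep]
  | succ n ih => have := len_succ_le hL hrep n; omega

end Enum

section Levels
variable {A : Type*} [Fintype A] [LinearOrder A]

noncomputable def NL (rep : ℕ → List A) (ℓ : ℕ) : ℕ := sInf {n | (rep n).length = ℓ}

noncomputable def idx (rep : ℕ → List A) (w : List A) : ℕ := Function.invFun rep w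

noncomputable def pr (rep : ℕ → List A) (k n : ℕ) : ℕ := idx rep ((rep n).take k)

variable {L : Set (List A)} {rep : ℕ → List A}
variable (hL : PCE L) (hrep : RadixEnum L rep)
include hL hrep

lemma len_NL (ℓ : ℕ) : (rep (NL rep ℓ)).length = ℓ :=
  Nat.sInf_mem (exists_len hL hrep ℓ)

lemma NL_le {n ℓ : ℕ} (h : (rep n).length = ℓ) : NL rep ℓ ≤ n := Nat.sInf_le h

lemma exists_eq_len_of_le {c n : ℕ} (h : c ≤ (rep n).length) :
    ∃ m ≤ n, (rep m).length = c := by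
  induction n with
  | zero =>
    refine ⟨0, le_refl 0, ?_⟩
    have : (rep 0).length = 0 := by rw [rep_zero hL hrep]; rfl
    omega
  | succ n ih =>
    rcases le_or_gt c (rep n).length with h' | h'
    · obtain ⟨m, hm, hm'⟩ := ih h'
      exact ⟨m, by omega, hm'⟩
    · have := len_succ_le hL hrep n
      exact ⟨n+1, le_refl _, by omega⟩

lemma NL_le_iff {n ℓ : ℕ} : NL rep ℓ ≤ n ↔ ℓ ≤ (rep n).length := by
  constructor
  · intro h
    have := len_mono hL hrep h
    rw [len_NL hL hrep] at this
    exact this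
  · intro h
    obtain ⟨m, hm, hm'⟩ := exists_eq_len_of_le hL hrep h
    exact le_trans (NL_le hL hrep hm') hm

lemma len_eq_iff {n ℓ : ℕ} : (rep n).length = ℓ ↔ NL rep ℓ ≤ n ∧ n < NL rep (ℓ+1) := by
  constructor
  · intro h
    refine ⟨NL_le hL hrep h, ?_⟩
    by_contra hc
    push_neg at hc
    have := (NL_le_iff hL hrep).mp hc
    omega
  · rintro ⟨h1, h2⟩
    have h1' := (NL_le_iff hL hrep).mp h1
    have h2' : ¬ (ℓ + 1 ≤ (rep n).length) := fun hc =>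
      absurd ((NL_le_iff hL hrep).mpr hc) (by omega)
    omega

lemma NL_zero : NL rep 0 = 0 :=
  Nat.le_zero.mp (NL_le hL hrep (by rw [rep_zero hL hrep]; rfl))

lemma NL_lt_succ (ℓ : ℕ) : NL rep ℓ < NL rep (ℓ+1) :=
  ((len_eq_iff hL hrep).mp (len_NL hL hrep ℓ)).2

lemma NL_mono {ℓ ℓ' : ℕ} (h : ℓ ≤ ℓ') : NL rep ℓ ≤ NL rep ℓ' := by
  induction ℓ', h using Nat.le_induction with
  | base => exact le_refl _
  | succ m hm ih => exact le_trans ih (le_of_lt (NL_lt_succ hL hrep m))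

lemma NL_ge (ℓ : ℕ) : ℓ ≤ NL rep ℓ := by
  have := len_le_self hL hrep (NL rep ℓ)
  rw [len_NL hL hrep] at this
  exact this

lemma NL_one : NL rep 1 = 1 := by
  have h0 : NL rep 0 = 0 := NL_zero hL hrep
  have h1 : NL rep 0 < NL rep 1 := NL_lt_succ hL hrep 0
  have h2 : NL rep 1 ≤ 1 := by
    apply NL_le hL hrep
    have hle : (rep 1).length ≤ (rep 0).length + 1 := len_succ_le hL hrep 0
    have h0' : (rep 0).length = 0 := by rw [rep_zero hL hrep]; rfl
    have hne : (rep 1).length ≠ 0 := by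
      intro hc
      have he : rep 1 = [] := List.length_eq_zero_iff.mp hc
      have := rep_inj hL hrep (he.trans (rep_zero hL hrep).symm)
      omega
    omega
  omega

lemma len_last {ℓ : ℕ} : (rep (NL rep (ℓ+1) - 1)).length = ℓ := by
  rw [len_eq_iff hL hrep]
  have h1 := NL_lt_succ hL hrep ℓ
  have h2 : 1 ≤ NL rep (ℓ+1) := le_trans (by omega) (NL_ge hL hrep (ℓ+1))
  omega

lemma idx_rep (n : ℕ) : idx rep (rep n) = n :=
  Function.leftInverse_invFun (rep_inj hL hrep) n

lemma rep_idx {w : List A} (hw : w ∈ L) : rep (idx rep w) = w := by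
  obtain ⟨n, hn⟩ := rep_surj hL hrep hw
  exact Function.invFun_eq ⟨n, hn⟩

lemma take_mem {w : List A} (hw : w ∈ L) (k : ℕ) : w.take k ∈ L :=
  hL.1 w hw _ (List.take_prefix k w)

lemma rep_pr (k n : ℕ) : rep (pr rep k n) = (rep n).take k :=
  rep_idx hL hrep (take_mem hL hrep (rep_mem hL hrep n) k)

lemma len_pr {k n : ℕ} (hk : k ≤ (rep n).length) : (rep (pr rep k n)).length = k := by
  rw [rep_pr hL hrep, List.length_take]
  omega

lemma pr_self (n : ℕ) : pr rep ((rep n).length) n = n := by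
  unfold pr
  rw [List.take_length, idx_rep hL hrep]

lemma pr_eq_iff {k m n : ℕ} : pr rep k m = pr rep k n ↔ (rep m).take k = (rep n).take k := by
  constructor
  · intro h
    have := congrArg rep h
    rwa [rep_pr hL hrep, rep_pr hL hrep] at this
  · intro h
    unfold pr
    rw [h]

lemma pr_le_pr {m n k ℓ : ℕ} (hm : (rep m).length = ℓ) (hn : (rep n).length = ℓ)
    (hk : k ≤ ℓ) (h : m ≤ n) : pr rep k m ≤ pr rep k n := by
  by_contra hc
  push_neg at hc
  have hradix := (rep_lt_iff hL hrep).mp hc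
  rcases hradix with hlen | ⟨-, hlex⟩
  · rw [len_pr hL hrep (by omega), len_pr hL hrep (by omega)] at hlen
    omega
  · rw [rep_pr hL hrep, rep_pr hL hrep] at hlex
    have hlex2 := lex_take k _ _ hlex
    have : n < m := by
      rw [rep_lt_iff hL hrep (L := L)]
      right
      exact ⟨by omega, hlex2⟩
    omega

lemma pr_lt_of_lt {m n k ℓ : ℕ} (hm : (rep m).length = ℓ) (hn : (rep n).length = ℓ)
    (hk : k ≤ ℓ) (h : pr rep k m < pr rep k n) : m < n := by
  by_contra hc
  push_neg at hc
  have := pr_le_pr hL hrep hn hm hk hc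
  omega

lemma pr_pr {k k' n : ℕ} (hk : k ≤ k') : pr rep k (pr rep k' n) = pr rep k n := by
  have h1 : (rep (pr rep k' n)).take k = (rep n).take k := by
    rw [rep_pr hL hrep, List.take_take]
    congr 1
    omega
  have h2 : pr rep k (pr rep k' n) = idx rep ((rep (pr rep k' n)).take k) := rfl
  rw [h2, h1]
  rfl

lemma NL_le_pr {k n : ℕ} (hk : k ≤ (rep n).length) : NL rep k ≤ pr rep k n :=
  NL_le hL hrep (len_pr hL hrep hk)

lemma pr_lt_NL {k n : ℕ} (hk : k ≤ (rep n).length) : pr rep k n < NL rep (k+1) :=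
  ((len_eq_iff hL hrep).mp (len_pr hL hrep hk)).2

lemma pr_NL {k ℓ : ℕ} (hk : k ≤ ℓ) : pr rep k (NL rep ℓ) = NL rep k := by
  have hz : rep (NL rep k) ∈ L := rep_mem hL hrep _
  obtain ⟨v, hv, hpre, hlen⟩ := exists_ext hL hrep hz ℓ (by rw [len_NL hL hrep]; exact hk)
  obtain ⟨nd, rfl⟩ := rep_surj hL hrep hv
  have hnd : NL rep ℓ ≤ nd := NL_le hL hrep hlen
  have htake : (rep nd).take k = rep (NL rep k) := by
    have := take_of_prefix hpre
    rwa [len_NL hL hrep] at this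
  have hprnd : pr rep k nd = NL rep k := by
    unfold pr
    rw [htake, idx_rep hL hrep]
  have h1 : pr rep k (NL rep ℓ) ≤ pr rep k nd :=
    pr_le_pr hL hrep (len_NL hL hrep ℓ) hlen hk hnd
  have h2 : NL rep k ≤ pr rep k (NL rep ℓ) :=
    NL_le_pr hL hrep (by rw [len_NL hL hrep]; exact hk)
  omega

lemma pr_NL_last {k ℓ : ℕ} (hk : k ≤ ℓ) : pr rep k (NL rep (ℓ+1) - 1) = NL rep (k+1) - 1 := by
  have hz : rep (NL rep (k+1) - 1) ∈ L := rep_mem hL hrep _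
  obtain ⟨v, hv, hpre, hlen⟩ := exists_ext hL hrep hz ℓ (by rw [len_last hL hrep]; exact hk)
  obtain ⟨nd, rfl⟩ := rep_surj hL hrep hv
  have hnd : nd ≤ NL rep (ℓ+1) - 1 := by
    have : nd < NL rep (ℓ+1) := ((len_eq_iff hL hrep).mp hlen).2
    omega
  have htake : (rep nd).take k = rep (NL rep (k+1) - 1) := by
    have := take_of_prefix hpre
    rwa [len_last hL hrep] at this
  have hprnd : pr rep k nd = NL rep (k+1) - 1 := by
    unfold pr
    rw [htake, idx_rep hL hrep]
  have h1 : pr rep k nd ≤ pr rep k (NL rep (ℓ+1) - 1) :=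
    pr_le_pr hL hrep hlen (len_last hL hrep) hk hnd
  have h2 : pr rep k (NL rep (ℓ+1) - 1) < NL rep (k+1) :=
    pr_lt_NL hL hrep (by rw [len_last hL hrep]; exact hk)
  omega

lemma pr_consec {n ℓ k : ℕ} (h1 : (rep n).length = ℓ) (h2 : (rep (n+1)).length = ℓ)
    (hk : k ≤ ℓ) (hne : (rep n).take k ≠ (rep (n+1)).take k) :
    pr rep k (n+1) = pr rep k n + 1 := by
  have hmono : pr rep k n ≤ pr rep k (n+1) := pr_le_pr hL hrep h1 h2 hk (by omega)
  have hneidx : pr rep k n ≠ pr rep k (n+1) := fun hc =>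
    hne ((pr_eq_iff hL hrep).mp hc)
  by_contra hc
  have hgap : pr rep k n + 1 < pr rep k (n+1) := by omega
  set m := pr rep k n + 1 with hm
  have hmlen : (rep m).length = k := by
    rw [len_eq_iff hL hrep]
    constructor
    · have := NL_le_pr hL hrep (k := k) (n := n) (by omega)
      omega
    · have := pr_lt_NL hL hrep (k := k) (n := n+1) (by omega)
      omega
  obtain ⟨v, hv, hpre, hlen⟩ := exists_ext hL hrep (rep_mem hL hrep m) ℓ (by omega)
  obtain ⟨nd, rfl⟩ := rep_surj hL hrep hv
  have hprnd : pr rep k nd = m := by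
    unfold pr
    rw [show (rep nd).take k = rep m by
      have := take_of_prefix hpre; rwa [hmlen] at this, idx_rep hL hrep]
  have hlt1 : n < nd := pr_lt_of_lt hL hrep h1 hlen hk (by omega)
  have hlt2 : nd < n + 1 := pr_lt_of_lt hL hrep hlen h2 hk (by omega)
  omega

end Levels

section SForm
variable {A : Type*} [Fintype A] [LinearOrder A]
variable {L : Set (List A)} {rep : ℕ → List A}
variable (hL : PCE L) (hrep : RadixEnum L rep)
include hL hrep

lemma jump_sum (ℓ : ℕ) :
    ∑ k ∈ Finset.Icc 1 ℓ, (NL rep (k+1) - 1) + (ℓ+1) = ∑ k ∈ Finset.Icc 1 (ℓ+1), NL rep k := by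
  induction ℓ with
  | zero =>
    simp [NL_one hL hrep]
  | succ ℓ ih =>
    rw [Finset.sum_Icc_succ_top (by omega : 1 ≤ ℓ + 1),
        Finset.sum_Icc_succ_top (by omega : 1 ≤ ℓ + 1 + 1)]
    have h1 : 1 ≤ NL rep (ℓ+1+1) := le_trans (by omega) (NL_ge hL hrep _)
    omega

lemma S_formula (n : ℕ) :
    ∑ i ∈ Finset.range n, Delta (rep i) (rep (i+1)) =
      ∑ k ∈ Finset.Icc 1 (rep n).length, pr rep k n := by
  induction n with
  | zero =>
    rw [rep_zero hL hrep]
    simp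
  | succ n ih =>
    rw [Finset.sum_range_succ, ih]
    have hmono : (rep n).length ≤ (rep (n+1)).length := len_mono hL hrep (by omega)
    have hstep : (rep (n+1)).length ≤ (rep n).length + 1 := len_succ_le hL hrep n
    set ℓ := (rep n).length with hℓ
    rcases eq_or_lt_of_le hmono with heq | hlt
    · -- same length
      have hlen2 : (rep (n+1)).length = ℓ := heq.symm
      have hne : rep n ≠ rep (n+1) := fun hc => by
        have := rep_inj hL hrep hc; omega
      set c := lcpLen (rep n) (rep (n+1)) with hc
      have hcle : c ≤ ℓ := lcpLen_le_left _ _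
      have hdelta : Delta (rep n) (rep (n+1)) = ℓ - c := Delta_eq_of_len_eq hlen2.symm
      have hpt : ∀ k ∈ Finset.Icc 1 ℓ,
          pr rep k (n+1) = pr rep k n + (if c < k then 1 else 0) := by
        intro k hk
        rw [Finset.mem_Icc] at hk
        by_cases hkc : c < k
        · rw [if_pos hkc]
          refine pr_consec hL hrep rfl hlen2 hk.2 ?_
          intro hceq
          have := (take_eq_take_iff_lcp (rep n) (rep (n+1)) hne k).mp hceq
          omega
        · rw [if_neg hkc]
          push_neg at hkc
          have hceq := (take_eq_take_iff_lcp (rep n) (rep (n+1)) hne k).mpr hkc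
          have := (pr_eq_iff hL hrep (k := k) (m := n) (n := n+1)).mpr hceq
          omega
      rw [hlen2, Finset.sum_congr rfl hpt, Finset.sum_add_distrib, hdelta]
      have hcount : ∑ k ∈ Finset.Icc 1 ℓ, (if c < k then 1 else 0) = ℓ - c := by
        rw [Finset.sum_boole]
        have hfe : (Finset.Icc 1 ℓ).filter (fun k => c < k) = Finset.Icc (c+1) ℓ := by
          ext k
          simp only [Finset.mem_filter, Finset.mem_Icc]
          omega
        rw [hfe]
        simp [Nat.card_Icc]
      rw [hcount]
    · -- jump
      have hlen2 : (rep (n+1)).length = ℓ + 1 := by omega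
      have hfirst : n + 1 = NL rep (ℓ+1) := by
        have h1 : NL rep (ℓ+1) ≤ n+1 := NL_le hL hrep hlen2
        have h2 : ¬ (NL rep (ℓ+1) ≤ n) := fun hc => by
          have := (NL_le_iff hL hrep).mp hc
          omega
        omega
      have hlast : n = NL rep (ℓ+1) - 1 := by omega
      have hdelta : Delta (rep n) (rep (n+1)) = ℓ + 1 := by
        rw [Delta_eq_of_len_ne (by omega)]
        omega
      have hpt1 : ∀ k ∈ Finset.Icc 1 ℓ, pr rep k n = NL rep (k+1) - 1 := by
        intro k hk
        rw [Finset.mem_Icc] at hk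
        rw [hlast]
        exact pr_NL_last hL hrep hk.2
      have hpt2 : ∀ k ∈ Finset.Icc 1 (ℓ+1), pr rep k (n+1) = NL rep k := by
        intro k hk
        rw [Finset.mem_Icc] at hk
        rw [hfirst]
        exact pr_NL hL hrep hk.2
      rw [hlen2, Finset.sum_congr rfl hpt1, Finset.sum_congr rfl hpt2, hdelta]
      exact jump_sum hL hrep ℓ

end SForm

section Count
variable {A : Type*} [Fintype A] [LinearOrder A]

noncomputable def chl (L : Set (List A)) (w : List A) : Finset A :=
  (Set.toFinite {a | w ++ [a] ∈ L}).toFinset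

lemma mem_chl {L : Set (List A)} {w : List A} {a : A} : a ∈ chl L w ↔ w ++ [a] ∈ L :=
  Set.Finite.mem_toFinset _

lemma nodeDeg_eq_chl (L : Set (List A)) (w : List A) : nodeDeg L w = (chl L w).card :=
  Set.ncard_eq_toFinset_card _ _

variable {L : Set (List A)} {rep : ℕ → List A}
variable (hL : PCE L) (hrep : RadixEnum L rep)
include hL hrep

lemma lex_of_lt {m n ℓ : ℕ} (hm : (rep m).length = ℓ) (hn : (rep n).length = ℓ)
    (h : m < n) : List.Lex (· < ·) (rep m) (rep n) := by
  rcases hrep.2 m n h with h' | ⟨-, h'⟩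
  · omega
  · exact h'

lemma idx_lt_of_lex {w : List A} {n : ℕ} (hw : w ∈ L) (hlen : w.length = (rep n).length)
    (hlex : List.Lex (· < ·) w (rep n)) : idx rep w < n := by
  rw [rep_lt_iff hL hrep (L := L)]
  right
  rw [rep_idx hL hrep hw]
  exact ⟨hlen, hlex⟩

lemma take_lex_of_lex {m n ℓ k : ℕ} (hm : (rep m).length = ℓ) (hn : (rep n).length = ℓ)
    (hmn : m < n) (hne : (rep m).take k ≠ (rep n).take k) :
    List.Lex (· < ·) ((rep m).take k) ((rep n).take k) := by
  rcases lex_trichot ((rep m).take k) ((rep n).take k) with h | h | h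
  · exact h
  · exact absurd h hne
  · exfalso
    have h2 := lex_take k _ _ h
    exact lex_asymm (lex_of_lt hL hrep hm hn hmn) h2

lemma exists_last {n ℓ : ℕ} (h : (rep n).length = ℓ + 1) :
    ∃ a, rep n = (rep n).take ℓ ++ [a] := by
  have hne : rep n ≠ [] := by
    intro hc
    rw [hc] at h
    simp at h
  refine ⟨(rep n).getLast hne, ?_⟩
  conv_lhs => rw [← List.dropLast_append_getLast hne]
  congr 1
  rw [List.dropLast_eq_take, h]
  simp

lemma no_between {x : List A} {n' n ℓ : ℕ} (hx : x ∈ L) (hlenx : x.length = ℓ + 1)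
    (hn' : (rep n').length = ℓ + 1) (hn : (rep n).length = ℓ + 1) (hsucc : n = n' + 1)
    (h1 : List.Lex (· < ·) (rep n') x) (h2 : List.Lex (· < ·) x (rep n)) : False := by
  have hm1 : n' < idx rep x := by
    have : idx rep (rep n') < idx rep x := by
      rw [rep_lt_iff hL hrep (L := L), rep_idx hL hrep hx, rep_idx hL hrep (rep_mem hL hrep n')]
      right
      exact ⟨by omega, h1⟩
    rwa [idx_rep hL hrep] at this
  have hm2 : idx rep x < n := idx_lt_of_lex hL hrep hx (by omega) h2
  omega

lemma key {ℓ : ℕ} : ∀ j n, n = NL rep (ℓ+1) + j → (rep n).length = ℓ + 1 →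
    n = NL rep (ℓ+1) + (∑ m ∈ Finset.Ico (NL rep ℓ) (pr rep ℓ n), (chl L (rep m)).card)
        + ((chl L ((rep n).take ℓ)).filter
            (fun a => List.Lex (· < ·) ((rep n).take ℓ ++ [a]) (rep n))).card := by
  intro j
  induction j with
  | zero =>
    intro n hn hlen
    have hprn : pr rep ℓ n = NL rep ℓ := by
      rw [hn]; simpa using pr_NL hL hrep (ℓ := ℓ+1) (k := ℓ) (by omega)
    have hcnt : ((chl L ((rep n).take ℓ)).filter
        (fun a => List.Lex (· < ·) ((rep n).take ℓ ++ [a]) (rep n))) = ∅ := by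
      rw [Finset.filter_eq_empty_iff]
      intro a ha hlex
      have hxmem : (rep n).take ℓ ++ [a] ∈ L := mem_chl.mp ha
      have hxlen : ((rep n).take ℓ ++ [a]).length = ℓ + 1 := by
        rw [List.length_append, List.length_take]
        simp; omega
      have := idx_lt_of_lex hL hrep hxmem (by omega) hlex
      have h2 : NL rep (ℓ+1) ≤ idx rep ((rep n).take ℓ ++ [a]) :=
        NL_le hL hrep (by rw [rep_idx hL hrep hxmem]; exact hxlen)
      omega
    rw [hcnt, hprn]
    simp [hn]
  | succ j ih =>
    intro n hn hlen
    set n' := NL rep (ℓ+1) + j with hn'def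
    have hsucc : n = n' + 1 := by omega
    have hlevn : n < NL rep (ℓ+1+1) := ((len_eq_iff hL hrep).mp hlen).2
    have hlen' : (rep n').length = ℓ + 1 := by
      rw [len_eq_iff hL hrep]
      omega
    have hIH := ih n' rfl hlen'
    obtain ⟨b, hb⟩ := exists_last hL hrep hlen'
    obtain ⟨b', hb'⟩ := exists_last hL hrep hlen
    set u := (rep n').take ℓ with hu
    set v := (rep n).take ℓ with hv
    have hulen : u.length = ℓ := by rw [hu, List.length_take]; omega
    have hvlen : v.length = ℓ := by rw [hv, List.length_take]; omega
    have hbmem : b ∈ chl L u := by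
      rw [mem_chl, ← hb]; exact rep_mem hL hrep n'
    have hb'mem : b' ∈ chl L v := by
      rw [mem_chl, ← hb']; exact rep_mem hL hrep n
    have hlexnn' : List.Lex (· < ·) (rep n') (rep n) :=
      lex_of_lt hL hrep hlen' hlen (by omega)
    by_cases hteq : u = v
    · -- same parent
      have hpr : pr rep ℓ n = pr rep ℓ n' := (pr_eq_iff hL hrep).mpr (hteq.symm)
      have hbb' : b < b' := by
        apply lt_of_lex_append_single (w := v)
        rw [← hb']
        rw [hteq] at hb
        rw [← hb]
        exact hlexnn'
      have hfilt' : ((chl L u).filter (fun a => List.Lex (· < ·) (u ++ [a]) (rep n'))) =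
          (chl L v).filter (fun a => a < b) := by
        rw [hteq]
        apply Finset.filter_congr
        intro a ha
        rw [← hteq]
        rw [hb]
        constructor
        · intro h
          exact lt_of_lex_append_single h
        · intro h
          exact lex_append_single h
      have hfilt : ((chl L v).filter (fun a => List.Lex (· < ·) (v ++ [a]) (rep n))) =
          (chl L v).filter (fun a => a < b') := by
        apply Finset.filter_congr
        intro a ha
        rw [hb']
        constructor
        · intro h
          exact lt_of_lex_append_single h
        · intro h
          exact lex_append_single h
      have hnoc : ∀ c ∈ chl L v, c < b' → c ≤ b := by
        intro c hc hcb'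
        by_contra hcb
        push_neg at hcb
        apply no_between hL hrep (x := v ++ [c]) (n' := n') (n := n) (ℓ := ℓ)
          (mem_chl.mp hc) (by rw [List.length_append]; simp [hvlen]) hlen' hlen hsucc
        · rw [hb, hteq]
          exact lex_append_single hcb
        · rw [hb']
          exact lex_append_single hcb'
      have hset : (chl L v).filter (fun a => a < b') =
          insert b ((chl L v).filter (fun a => a < b)) := by
        ext c
        simp only [Finset.mem_filter, Finset.mem_insert]
        constructor
        · rintro ⟨hc, hcb'⟩
          rcases lt_or_eq_of_le (hnoc c hc hcb') with h | h
          · exact Or.inr ⟨hc, h⟩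
          · exact Or.inl h
        · rintro (rfl | ⟨hc, hcb⟩)
          · exact ⟨hteq ▸ hbmem, hbb'⟩
          · exact ⟨hc, lt_trans hcb hbb'⟩
      have hcard : ((chl L v).filter (fun a => a < b')).card =
          ((chl L v).filter (fun a => a < b)).card + 1 := by
        rw [hset, Finset.card_insert_of_notMem (by simp)]
      rw [hfilt, hcard, hpr, ← hfilt']
      omega
    · -- parent changes
      have hpr : pr rep ℓ n = pr rep ℓ n' + 1 := by
        rw [hsucc] at hlen ⊢
        refine pr_consec hL hrep hlen' hlen (by omega) ?_
        rw [← hu, ← hsucc, ← hv]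
        exact hteq
      have htlex : List.Lex (· < ·) u v :=
        take_lex_of_lex hL hrep hlen' hlen (by omega) hteq
      have hcnt0 : ((chl L v).filter
          (fun a => List.Lex (· < ·) (v ++ [a]) (rep n))) = ∅ := by
        rw [Finset.filter_eq_empty_iff]
        intro a ha hlex
        have hxmem : v ++ [a] ∈ L := mem_chl.mp ha
        apply no_between hL hrep (x := v ++ [a]) (n' := n') (n := n) (ℓ := ℓ)
          hxmem (by rw [List.length_append]; simp [hvlen]) hlen' hlen hsucc
        · apply lex_take ℓ
          rw [take_append_eq hvlen]
          rw [← hu]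
          exact htlex
        · exact hlex
      have hmax : ∀ c ∈ chl L u, c ≤ b := by
        intro c hc
        by_contra hcb
        push_neg at hcb
        apply no_between hL hrep (x := u ++ [c]) (n' := n') (n := n) (ℓ := ℓ)
          (mem_chl.mp hc) (by rw [List.length_append]; simp [hulen]) hlen' hlen hsucc
        · rw [hb]
          exact lex_append_single hcb
        · apply lex_take ℓ
          rw [take_append_eq hulen, ← hv]
          exact htlex
      have hfilt' : ((chl L u).filter (fun a => List.Lex (· < ·) (u ++ [a]) (rep n'))) =
          (chl L u).filter (fun a => a < b) := by
        apply Finset.filter_congr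
        intro a ha
        rw [hb]
        constructor
        · intro h
          exact lt_of_lex_append_single h
        · intro h
          exact lex_append_single h
      have hset : chl L u = insert b ((chl L u).filter (fun a => a < b)) := by
        ext c
        simp only [Finset.mem_filter, Finset.mem_insert]
        constructor
        · intro hc
          rcases lt_or_eq_of_le (hmax c hc) with h | h
          · exact Or.inr ⟨hc, h⟩
          · exact Or.inl h
        · rintro (rfl | ⟨hc, -⟩)
          · exact hbmem
          · exact hc
      have hcardeq : (chl L u).card =
          ((chl L u).filter (fun a => a < b)).card + 1 := by
        conv_lhs => rw [hset]
        rw [Finset.card_insert_of_notMem (by simp)]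
      have hsum : ∑ m ∈ Finset.Ico (NL rep ℓ) (pr rep ℓ n), (chl L (rep m)).card =
          ∑ m ∈ Finset.Ico (NL rep ℓ) (pr rep ℓ n'), (chl L (rep m)).card
            + (chl L (rep (pr rep ℓ n'))).card := by
        rw [hpr]
        exact Finset.sum_Ico_succ_top (NL_le_pr hL hrep (by omega)) _
      have hrepar : rep (pr rep ℓ n') = u := rep_pr hL hrep ℓ n'
      rw [hcnt0, hsum, hrepar, hcardeq, ← hfilt']
      simp only [Finset.card_empty]
      omega

end Count

section Count2
variable {A : Type*} [Fintype A] [LinearOrder A]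
variable {L : Set (List A)} {rep : ℕ → List A}
variable (hL : PCE L) (hrep : RadixEnum L rep)
include hL hrep

lemma chl_card_pos {w : List A} (hw : w ∈ L) : 1 ≤ (chl L w).card := by
  obtain ⟨v, hv, hpre, hlen⟩ := exists_ext hL hrep hw (w.length + 1) (by omega)
  have hvne : v.length = w.length + 1 := hlen
  obtain ⟨a, ha⟩ : ∃ a, v = v.take w.length ++ [a] := by
    have : v ≠ [] := by intro hc; rw [hc] at hvne; simp at hvne
    refine ⟨v.getLast this, ?_⟩
    conv_lhs => rw [← List.dropLast_append_getLast this]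
    congr 1
    rw [List.dropLast_eq_take, hvne]
    simp
  have htk : v.take w.length = w := take_of_prefix hpre
  rw [htk] at ha
  have : a ∈ chl L w := by rw [mem_chl, ← ha]; exact hv
  exact Finset.card_pos.mpr ⟨a, this⟩

lemma last_child {n ℓ : ℕ} (hlen : (rep n).length = ℓ + 1) (hlast : n + 1 = NL rep (ℓ+1+1)) :
    ((chl L ((rep n).take ℓ)).filter
      (fun a => List.Lex (· < ·) ((rep n).take ℓ ++ [a]) (rep n))).card
      = (chl L ((rep n).take ℓ)).card - 1 := by
  obtain ⟨b, hb⟩ := exists_last hL hrep hlen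
  set v := (rep n).take ℓ with hv
  have hvlen : v.length = ℓ := by rw [hv, List.length_take]; omega
  have hbmem : b ∈ chl L v := by rw [mem_chl, ← hb]; exact rep_mem hL hrep n
  have hmax : ∀ c ∈ chl L v, c ≤ b := by
    intro c hc
    by_contra hcb
    push_neg at hcb
    have hxmem : v ++ [c] ∈ L := mem_chl.mp hc
    have hxlen : (v ++ [c]).length = ℓ + 1 := by rw [List.length_append]; simp [hvlen]
    have hlex : List.Lex (· < ·) (rep n) (v ++ [c]) := by
      rw [hb]; exact lex_append_single hcb
    have h1 : n < idx rep (v ++ [c]) := by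
      have : idx rep (rep n) < idx rep (v ++ [c]) := by
        rw [rep_lt_iff hL hrep (L := L), rep_idx hL hrep hxmem,
          rep_idx hL hrep (rep_mem hL hrep n)]
        right
        exact ⟨by omega, hlex⟩
      rwa [idx_rep hL hrep] at this
    have h2 : idx rep (v ++ [c]) < NL rep (ℓ+1+1) :=
      ((len_eq_iff hL hrep).mp (by rw [rep_idx hL hrep hxmem]; exact hxlen)).2
    omega
  have hfilt : ((chl L v).filter (fun a => List.Lex (· < ·) (v ++ [a]) (rep n))) =
      (chl L v).filter (fun a => a < b) := by
    apply Finset.filter_congr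
    intro a ha
    rw [hb]
    constructor
    · intro h
      exact lt_of_lex_append_single h
    · intro h
      exact lex_append_single h
  have hset : chl L v = insert b ((chl L v).filter (fun a => a < b)) := by
    ext c
    simp only [Finset.mem_filter, Finset.mem_insert]
    constructor
    · intro hc
      rcases lt_or_eq_of_le (hmax c hc) with h | h
      · exact Or.inr ⟨hc, h⟩
      · exact Or.inl h
    · rintro (rfl | ⟨hc, -⟩)
      · exact hbmem
      · exact hc
  rw [hfilt]
  have : (chl L v).card = ((chl L v).filter (fun a => a < b)).card + 1 := by
    conv_lhs => rw [hset]
    rw [Finset.card_insert_of_notMem (by simp)]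
  omega

lemma key_full (ℓ : ℕ) :
    NL rep (ℓ+1+1) = NL rep (ℓ+1)
      + ∑ m ∈ Finset.Ico (NL rep ℓ) (NL rep (ℓ+1)), (chl L (rep m)).card := by
  set n := NL rep (ℓ+1+1) - 1 with hn
  have hpos : 1 ≤ NL rep (ℓ+1+1) := le_trans (by omega) (NL_ge hL hrep _)
  have hlen : (rep n).length = ℓ + 1 := len_last hL hrep
  have hkey := key hL hrep (n - NL rep (ℓ+1)) n
    (by
      have h1 : NL rep (ℓ+1) ≤ n := ((len_eq_iff hL hrep).mp hlen).1
      omega) hlen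
  have hpr : pr rep ℓ n = NL rep (ℓ+1) - 1 := pr_NL_last hL hrep (by omega)
  have hcnt := last_child hL hrep hlen (by omega)
  have hrepar : rep (pr rep ℓ n) = (rep n).take ℓ := rep_pr hL hrep ℓ n
  have hcard1 : 1 ≤ (chl L ((rep n).take ℓ)).card := by
    rw [← hrepar]
    exact chl_card_pos hL hrep (rep_mem hL hrep _)
  have hNpos : NL rep ℓ + 1 ≤ NL rep (ℓ+1) := NL_lt_succ hL hrep ℓ
  have hsum : ∑ m ∈ Finset.Ico (NL rep ℓ) (NL rep (ℓ+1)), (chl L (rep m)).card =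
      ∑ m ∈ Finset.Ico (NL rep ℓ) (NL rep (ℓ+1) - 1), (chl L (rep m)).card
        + (chl L (rep (NL rep (ℓ+1) - 1))).card := by
    have h2 : NL rep (ℓ+1) = (NL rep (ℓ+1) - 1) + 1 := by omega
    conv_lhs => rw [h2]
    exact Finset.sum_Ico_succ_top (by omega) _
  have hly : rep (NL rep (ℓ+1) - 1) = (rep n).take ℓ := by rw [← hpr, hrepar]
  rw [hcnt, hpr] at hkey
  rw [hsum, hly]
  omega

lemma key_bound {ℓ n : ℕ} (hlen : (rep n).length = ℓ + 1) :
    ∃ e, e + 1 ≤ Fintype.card A ∧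
      n = NL rep (ℓ+1) + (∑ m ∈ Finset.Ico (NL rep ℓ) (pr rep ℓ n), (chl L (rep m)).card) + e := by
  have hkey := key hL hrep (n - NL rep (ℓ+1)) n
    (by
      have h1 : NL rep (ℓ+1) ≤ n := ((len_eq_iff hL hrep).mp hlen).1
      omega) hlen
  refine ⟨_, ?_, hkey⟩
  obtain ⟨b, hb⟩ := exists_last hL hrep hlen
  set v := (rep n).take ℓ with hv
  have hbmem : b ∈ chl L v := by
    rw [mem_chl, ← hb]; exact rep_mem hL hrep n
  have hbnot : b ∉ ((chl L v).filter
      (fun a => List.Lex (· < ·) (v ++ [a]) (rep n))) := by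
    simp only [Finset.mem_filter]
    rintro ⟨-, hlex⟩
    rw [hb] at hlex
    exact absurd (lt_of_lex_append_single hlex) (lt_irrefl b)
  have hss : ((chl L v).filter
      (fun a => List.Lex (· < ·) (v ++ [a]) (rep n))).card
      < (chl L v).card :=
    Finset.card_lt_card (Finset.ssubset_iff_of_subset (Finset.filter_subset _ _)
      |>.mpr ⟨b, hbmem, hbnot⟩)
  have : (chl L v).card ≤ Fintype.card A := by
    rw [← Finset.card_univ]
    exact Finset.card_le_card (Finset.subset_univ _)
  omega

end Count2

section Rhythm
variable {q p : ℕ} {r : ℕ → ℕ}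

noncomputable def Rr (r : ℕ → ℕ) (m : ℕ) : ℕ := ∑ i ∈ Finset.range m, r i

lemma Rr_succ (m : ℕ) : Rr r (m+1) = Rr r m + r m := Finset.sum_range_succ _ _

lemma Rr_add_q (hq : 1 ≤ q) (hper : ∀ i, r (i + q) = r i)
    (hsum : ∑ i ∈ Finset.range q, r i = p) (x : ℕ) :
    Rr r (x + q) = Rr r x + p := by
  induction x with
  | zero => simpa [Rr] using hsum
  | succ x ih =>
    have h1 : x + 1 + q = (x + q) + 1 := by omega
    rw [h1, Rr_succ, ih, Rr_succ, hper x]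
    omega

lemma Rr_split (hq : 1 ≤ q) (hper : ∀ i, r (i + q) = r i)
    (hsum : ∑ i ∈ Finset.range q, r i = p) (m : ℕ) :
    Rr r m = p * (m / q) + Rr r (m % q) := by
  have key : ∀ t s, Rr r (s + q * t) = Rr r s + p * t := by
    intro t
    induction t with
    | zero => simp
    | succ t ih =>
      intro s
      have h1 : s + q * (t+1) = (s + q * t) + q := by ring
      rw [h1, Rr_add_q hq hper hsum, ih]
      ring
  conv_lhs => rw [← Nat.mod_add_div m q]
  rw [key]
  omega

lemma Rr_mono {m m' : ℕ} (h : m ≤ m') : Rr r m ≤ Rr r m' :=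
  Finset.sum_le_sum_of_subset (Finset.range_subset_range.mpr h)

lemma Rr_est (hq : 1 ≤ q) (hper : ∀ i, r (i + q) = r i)
    (hsum : ∑ i ∈ Finset.range q, r i = p) (m : ℕ) :
    |(q : ℝ) * Rr r m - p * m| ≤ p * q := by
  have hsplit := Rr_split hq hper hsum m
  have hmod : m % q < q := Nat.mod_lt _ (by omega)
  have hRmod : Rr r (m % q) ≤ p := by
    have := Rr_mono (r := r) (le_of_lt hmod)
    have h2 : Rr r q = p := hsum
    omega
  have hm : m = q * (m / q) + m % q := (Nat.div_add_mod m q).symm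
  rw [abs_le]
  constructor
  · have h1 : (q : ℝ) * Rr r m = q * p * (m / q : ℕ) + q * (Rr r (m % q) : ℕ) := by
      rw [hsplit]
      push_cast
      ring
    have h2 : (p : ℝ) * m = q * p * (m / q : ℕ) + p * (m % q : ℕ) := by
      conv_lhs => rw [hm]
      push_cast
      ring
    have h3 : (p : ℝ) * (m % q : ℕ) ≤ p * q := by
      have : ((m % q : ℕ) : ℝ) ≤ (q : ℝ) := by exact_mod_cast le_of_lt hmod
      have hp : (0:ℝ) ≤ p := by positivity
      nlinarith
    nlinarith [mul_nonneg (show (0:ℝ) ≤ q by positivity) (show (0:ℝ) ≤ (Rr r (m % q) : ℕ) by positivity)]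
  · have h1 : (q : ℝ) * Rr r m = q * p * (m / q : ℕ) + q * (Rr r (m % q) : ℕ) := by
      rw [hsplit]
      push_cast
      ring
    have h2 : (p : ℝ) * m = q * p * (m / q : ℕ) + p * (m % q : ℕ) := by
      conv_lhs => rw [hm]
      push_cast
      ring
    have h3 : (q : ℝ) * (Rr r (m % q) : ℕ) ≤ q * p := by
      have : ((Rr r (m % q) : ℕ) : ℝ) ≤ (p : ℝ) := by exact_mod_cast hRmod
      have hq' : (0:ℝ) ≤ q := by positivity
      nlinarith
    nlinarith [mul_nonneg (show (0:ℝ) ≤ p by positivity) (show (0:ℝ) ≤ ((m % q : ℕ) : ℝ) by positivity)]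

lemma sum_Ico_r {n₀ a b : ℕ} (h0 : n₀ ≤ a) (hab : a ≤ b) :
    Rr r (a - n₀) + ∑ m ∈ Finset.Ico a b, r (m - n₀) = Rr r (b - n₀) := by
  induction b, hab using Nat.le_induction with
  | base => simp
  | succ b hb ih =>
    rw [Finset.sum_Ico_succ_top hb, show b + 1 - n₀ = (b - n₀) + 1 by omega, Rr_succ]
    omega

end Rhythm

section RealAux

lemma down_geom {a : ℕ → ℝ} {x δ : ℝ} (hx0 : 0 ≤ x) (hx1 : x < 1) (hδ : 0 ≤ δ) {l₁ l : ℕ}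
    (h : ∀ k, l₁ ≤ k → k + 1 ≤ l → |a k - x * a (k+1)| ≤ δ) :
    ∀ i k, l₁ ≤ k → k + i = l → |a k - x^i * a l| ≤ δ / (1 - x) := by
  have h1x : 0 < 1 - x := by linarith
  intro i
  induction i with
  | zero =>
    intro k hk hkl
    have hkl' : k = l := by omega
    subst hkl'
    simp only [pow_zero, one_mul, sub_self, abs_zero]
    positivity
  | succ i ih =>
    intro k hk hkl
    have h1 := h k hk (by omega)
    have h2 := ih (k+1) (by omega) (by omega)
    have hsplit : a k - x^(i+1) * a l = (a k - x * a (k+1)) + x * (a (k+1) - x^i * a l) := by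
      ring
    rw [hsplit]
    calc |(a k - x * a (k+1)) + x * (a (k+1) - x^i * a l)|
        ≤ |a k - x * a (k+1)| + |x * (a (k+1) - x^i * a l)| := abs_add_le _ _
      _ = |a k - x * a (k+1)| + x * |a (k+1) - x^i * a l| := by
          rw [abs_mul, abs_of_nonneg hx0]
      _ ≤ δ + x * (δ / (1 - x)) := by
          have := mul_le_mul_of_nonneg_left h2 hx0
          linarith
      _ = δ / (1 - x) := by
          field_simp
          ring

lemma sum_pow_Icc (x : ℝ) : ∀ ℓ : ℕ, ∑ k ∈ Finset.Icc 1 ℓ, x^(ℓ-k) = ∑ i ∈ Finset.range ℓ, x^i := by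
  intro ℓ
  induction ℓ with
  | zero => simp
  | succ ℓ ih =>
    rw [Finset.sum_Icc_succ_top (by omega : 1 ≤ ℓ+1), geom_sum_succ]
    have hcong : ∀ k ∈ Finset.Icc 1 ℓ, x^(ℓ+1-k) = x * x^(ℓ-k) := by
      intro k hk
      rw [Finset.mem_Icc] at hk
      rw [show ℓ+1-k = (ℓ-k)+1 by omega]
      ring
    rw [Finset.sum_congr rfl hcong, ← Finset.mul_sum, ih]
    simp

lemma up_geom {a : ℕ → ℝ} {x δ : ℝ} (hx0 : 0 ≤ x) (hx1 : x ≤ 1) (hδ : 0 ≤ δ)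
    (ha : ∀ k, 0 ≤ a k) {l₁ : ℕ}
    (h : ∀ k, l₁ ≤ k → |a k - x * a (k+1)| ≤ δ) :
    ∀ m, l₁ ≤ m → a m * x^m ≤ a l₁ + δ * m := by
  intro m hm
  induction m, hm using Nat.le_induction with
  | base =>
    have h1 : x ^ l₁ ≤ 1 := pow_le_one₀ hx0 hx1
    have h2 : a l₁ * x ^ l₁ ≤ a l₁ := mul_le_of_le_one_right (ha l₁) h1
    have h3 : (0:ℝ) ≤ δ * l₁ := by positivity
    linarith
  | succ m hm ih =>
    have h1 := h m hm
    rw [abs_le] at h1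
    have hxm : (0:ℝ) ≤ x ^ m := by positivity
    have h2 : x * a (m+1) * x^m ≤ (a m + δ) * x^m := by
      apply mul_le_mul_of_nonneg_right _ hxm
      linarith
    have h3 : a (m+1) * x^(m+1) = x * a (m+1) * x^m := by ring
    have h4 : x^m ≤ 1 := pow_le_one₀ hx0 hx1
    have h5 : δ * x^m ≤ δ := mul_le_of_le_one_right hδ h4
    have h6 : a m * x^m ≤ a l₁ + δ * m := ih
    rw [h3]
    have h2b : (a m + δ) * x^m = a m * x^m + δ * x^m := by ring
    push_cast
    linarith

end RealAux

section Analysis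
variable {A : Type*} [Fintype A] [LinearOrder A]
variable {L : Set (List A)} {rep : ℕ → List A} {p q : ℕ} {r : ℕ → ℕ} {n₀ : ℕ}
variable (hL : PCE L) (hrep : RadixEnum L rep)
variable (hq : 1 ≤ q) (hpq : q < p) (hper : ∀ i, r (i + q) = r i)
variable (hsum : ∑ i ∈ Finset.range q, r i = p)
variable (hsig : ∀ n ≥ n₀, signature L rep n = r (n - n₀))
include hL hrep hq hpq hper hsum hsig

lemma deg_r {m : ℕ} (hm : max n₀ 1 ≤ m) : (chl L (rep m)).card = r (m - n₀) := by
  have hs := hsig m (by omega)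
  unfold signature at hs
  rw [if_neg (by omega : m ≠ 0)] at hs
  rw [← nodeDeg_eq_chl]
  omega

lemma NLrec_nat {k : ℕ} (hk : max n₀ 1 ≤ k) :
    NL rep (k+1+1) + Rr r (NL rep k - n₀) = NL rep (k+1) + Rr r (NL rep (k+1) - n₀) := by
  have hfull := key_full hL hrep k
  have hNk : max n₀ 1 ≤ NL rep k := le_trans hk (NL_ge hL hrep k)
  have hcong : ∀ m ∈ Finset.Ico (NL rep k) (NL rep (k+1)), (chl L (rep m)).card = r (m - n₀) := by
    intro m hm
    rw [Finset.mem_Ico] at hm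
    exact deg_r hL hrep hq hpq hper hsum hsig (by omega)
  rw [Finset.sum_congr rfl hcong] at hfull
  have hIco := sum_Ico_r (r := r) (n₀ := n₀) (a := NL rep k) (b := NL rep (k+1))
    (by omega) (le_of_lt (NL_lt_succ hL hrep k))
  omega

lemma NLc : ∀ k, max n₀ 1 ≤ k →
    (NL rep (k+1) : ℤ) - Rr r (NL rep k - n₀)
      = (NL rep (max n₀ 1 + 1) : ℤ) - Rr r (NL rep (max n₀ 1) - n₀) := by
  intro k hk
  induction k, hk using Nat.le_induction with
  | base => rfl
  | succ k hk ih =>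
    have := NLrec_nat hL hrep hq hpq hper hsum hsig hk
    push_cast
    push_cast at ih
    omega

lemma N_step_est : ∃ δ : ℝ, 0 ≤ δ ∧ ∀ k, max n₀ 1 ≤ k →
    |(NL rep k : ℝ) - (q / p : ℝ) * NL rep (k+1)| ≤ δ := by
  classical
  set c₀ : ℤ := (NL rep (max n₀ 1 + 1) : ℤ) - Rr r (NL rep (max n₀ 1) - n₀) with hc₀
  have hp0 : (0:ℝ) < p := by exact_mod_cast (by omega : 0 < p)
  refine ⟨(p * q + p * n₀ + q * |(c₀ : ℝ)|) / p, div_nonneg (by positivity) (by positivity), ?_⟩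
  intro k hk
  have hrec := NLc hL hrep hq hpq hper hsum hsig k hk
  set m := NL rep k - n₀ with hm
  have hn₀ : n₀ ≤ NL rep k := le_trans (by omega) (NL_ge hL hrep k)
  have hmval : (NL rep k : ℝ) = (m : ℝ) + n₀ := by
    rw [hm]; push_cast [hn₀]; ring
  have hNL1 : (NL rep (k+1) : ℝ) = (Rr r m : ℝ) + (c₀ : ℝ) := by
    have h0 : (NL rep (k+1) : ℤ) = (Rr r m : ℤ) + c₀ := by omega
    exact_mod_cast congrArg (fun z : ℤ => (z : ℝ)) h0
  have hest := Rr_est (p := p) hq hper hsum m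
  have hkey : |(p:ℝ) * NL rep k - q * NL rep (k+1)| ≤ p * q + p * n₀ + q * |(c₀ : ℝ)| := by
    have hsplit : (p:ℝ) * NL rep k - q * NL rep (k+1)
        = ((p:ℝ) * m - q * Rr r m) + (p:ℝ) * n₀ + (-(q * (c₀:ℝ))) := by
      rw [hmval, hNL1]; ring
    rw [hsplit]
    have h1 : |(p:ℝ) * m - q * Rr r m| ≤ p * q := by
      rw [abs_sub_comm]; exact hest
    calc |((p:ℝ) * m - q * Rr r m) + (p:ℝ) * n₀ + (-(q * (c₀:ℝ)))|
        ≤ |((p:ℝ) * m - q * Rr r m) + (p:ℝ) * n₀| + |(-(q * (c₀:ℝ)))| := abs_add_le _ _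
      _ ≤ |((p:ℝ) * m - q * Rr r m)| + |(p:ℝ) * n₀| + |(-(q * (c₀:ℝ)))| := by
          have := abs_add_le ((p:ℝ) * m - q * Rr r m) ((p:ℝ) * n₀)
          linarith
      _ ≤ p * q + p * n₀ + q * |(c₀ : ℝ)| := by
          have h2 : |(p:ℝ) * n₀| = (p:ℝ) * n₀ := abs_of_nonneg (by positivity)
          have h3 : |(-(q * (c₀:ℝ)))| = q * |(c₀:ℝ)| := by
            rw [abs_neg, abs_mul, abs_of_nonneg (by positivity : (0:ℝ) ≤ (q:ℝ))]
          linarith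
  have h2 : (NL rep k : ℝ) - q/p * NL rep (k+1) = ((p:ℝ) * NL rep k - q * NL rep (k+1))/p := by
    field_simp
  rw [h2, abs_div, abs_of_pos hp0]
  gcongr

lemma J_step_est : ∃ δ : ℝ, 0 ≤ δ ∧ ∀ k, max n₀ 1 ≤ k → ∀ n, (rep n).length = k + 1 →
    |((pr rep k n : ℝ) - NL rep k) - (q / p : ℝ) * ((n : ℝ) - NL rep (k+1))| ≤ δ := by
  classical
  have hp0 : (0:ℝ) < p := by exact_mod_cast (by omega : 0 < p)
  refine ⟨(2 * (p * q) + q * Fintype.card A) / p, div_nonneg (by positivity) (by positivity), ?_⟩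
  intro k hk n hlen
  obtain ⟨e, he, hkeyb⟩ := key_bound hL hrep hlen
  have hNk : max n₀ 1 ≤ NL rep k := le_trans hk (NL_ge hL hrep k)
  have hprk : NL rep k ≤ pr rep k n := NL_le_pr hL hrep (by omega)
  have hcong : ∀ m ∈ Finset.Ico (NL rep k) (pr rep k n), (chl L (rep m)).card = r (m - n₀) := by
    intro m hm
    rw [Finset.mem_Ico] at hm
    exact deg_r hL hrep hq hpq hper hsum hsig (by omega)
  rw [Finset.sum_congr rfl hcong] at hkeyb
  have hIco := sum_Ico_r (r := r) (n₀ := n₀) (a := NL rep k) (b := pr rep k n)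
    (by omega) hprk
  -- n + Rr(a) = NL(k+1) + Rr(b) + e  where a := NL k - n₀, b := pr k n - n₀
  set a := NL rep k - n₀ with ha
  set b := pr rep k n - n₀ with hb
  have hn₀ : n₀ ≤ NL rep k := by omega
  have hmain : n + Rr r a = NL rep (k+1) + Rr r b + e := by omega
  have hesta := Rr_est (p := p) hq hper hsum a
  have hestb := Rr_est (p := p) hq hper hsum b
  have hge : NL rep (k+1) ≤ n := ((len_eq_iff hL hrep).mp hlen).1
  have hkey : |(p:ℝ) * ((pr rep k n : ℝ) - NL rep k) - q * ((n:ℝ) - NL rep (k+1))|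
      ≤ 2 * (p * q) + q * Fintype.card A := by
    have hprv : (pr rep k n : ℝ) = (b:ℝ) + n₀ := by rw [hb]; push_cast [show n₀ ≤ pr rep k n by omega]; ring
    have hNLv : (NL rep k : ℝ) = (a:ℝ) + n₀ := by rw [ha]; push_cast [hn₀]; ring
    have hnv : (n:ℝ) - NL rep (k+1) = (Rr r b : ℝ) - Rr r a + e := by
      have h0 : (n:ℤ) + Rr r a = NL rep (k+1) + Rr r b + e := by exact_mod_cast hmain
      have h0' : ((n:ℤ) - NL rep (k+1) : ℤ) = (Rr r b : ℤ) - Rr r a + e := by omega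
      have := congrArg (fun z : ℤ => (z : ℝ)) h0'
      push_cast at this
      linarith
    have hsplit : (p:ℝ) * ((pr rep k n : ℝ) - NL rep k) - q * ((n:ℝ) - NL rep (k+1))
        = ((p:ℝ) * b - q * Rr r b) - ((p:ℝ) * a - q * Rr r a) + (-(q * (e:ℝ))) := by
      rw [hprv, hNLv, hnv]; ring
    rw [hsplit]
    have h1 : |(p:ℝ) * b - q * Rr r b| ≤ p * q := by rw [abs_sub_comm]; exact hestb
    have h2 : |(p:ℝ) * a - q * Rr r a| ≤ p * q := by rw [abs_sub_comm]; exact hesta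
    have h3 : |(-(q * (e:ℝ)))| ≤ q * Fintype.card A := by
      rw [abs_neg, abs_mul, abs_of_nonneg (by positivity : (0:ℝ) ≤ (q:ℝ)),
        abs_of_nonneg (by positivity : (0:ℝ) ≤ (e:ℝ))]
      have : (e:ℝ) ≤ Fintype.card A := by exact_mod_cast (by omega : e ≤ Fintype.card A)
      have hq0 : (0:ℝ) ≤ q := by positivity
      nlinarith
    calc |((p:ℝ) * b - q * Rr r b) - ((p:ℝ) * a - q * Rr r a) + (-(q * (e:ℝ)))|
        ≤ |((p:ℝ) * b - q * Rr r b) - ((p:ℝ) * a - q * Rr r a)| + |(-(q * (e:ℝ)))| := abs_add_le _ _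
      _ ≤ |((p:ℝ) * b - q * Rr r b)| + |((p:ℝ) * a - q * Rr r a)| + |(-(q * (e:ℝ)))| := by
          have := abs_sub ((p:ℝ) * b - q * Rr r b) ((p:ℝ) * a - q * Rr r a)
          linarith
      _ ≤ 2 * (p * q) + q * Fintype.card A := by linarith
  have h2 : ((pr rep k n : ℝ) - NL rep k) - q/p * ((n:ℝ) - NL rep (k+1))
      = ((p:ℝ) * ((pr rep k n : ℝ) - NL rep k) - q * ((n:ℝ) - NL rep (k+1)))/p := by
    field_simp
  rw [h2, abs_div, abs_of_pos hp0]
  gcongr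

set_option maxHeartbeats 2000000 in
lemma master : ∃ C : ℝ, 0 ≤ C ∧ ∀ n : ℕ, max n₀ 1 ≤ (rep n).length →
    |(∑ i ∈ Finset.range n, (Delta (rep i) (rep (i+1)) : ℝ))
      - (p / ((p:ℝ) - q) : ℝ) * n| ≤ C * ((rep n).length + 1) := by
  classical
  obtain ⟨δN, hδN0, hδN⟩ := N_step_est hL hrep hq hpq hper hsum hsig
  obtain ⟨δJ, hδJ0, hδJ⟩ := J_step_est hL hrep hq hpq hper hsum hsig
  set l₁ := max n₀ 1 with hl₁
  clear_value l₁
  have hl₁1 : 1 ≤ l₁ := by omega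
  have hp0 : (0:ℝ) < p := by exact_mod_cast (by omega : 0 < p)
  have hq0 : (0:ℝ) < q := by exact_mod_cast (by omega : 0 < q)
  have hqp : (q:ℝ) < p := by exact_mod_cast hpq
  set x : ℝ := (q:ℝ) / p with hx
  clear_value x
  have hx0 : 0 < x := by rw [hx]; positivity
  have hx1 : x < 1 := by rw [hx, div_lt_one hp0]; exact hqp
  have h1x : 0 < 1 - x := by linarith
  have h1xne : (1:ℝ) - x ≠ 0 := ne_of_gt h1x
  set lam : ℝ := 1 / (1 - x) with hlam
  clear_value lam
  have hlam0 : 0 < lam := by rw [hlam]; positivity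
  have hlameq : (p / ((p:ℝ) - q) : ℝ) = lam := by
    rw [hlam, hx]
    rw [div_eq_div_iff (by linarith) (by rw [hx] at h1x; linarith)]
    field_simp
  set δF := δN + δJ with hδF
  clear_value δF
  have hδF0 : 0 ≤ δF := by rw [hδF]; linarith
  -- step estimate for F k = pr k n
  have hF : ∀ (n : ℕ), ∀ k, l₁ ≤ k → k + 1 ≤ (rep n).length →
      |(pr rep k n : ℝ) - x * (pr rep (k+1) n : ℝ)| ≤ δF := by
    intro n k hk hkl
    have hlen' : (rep (pr rep (k+1) n)).length = k+1 := len_pr hL hrep (by omega)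
    have hJe := hδJ k hk (pr rep (k+1) n) hlen'
    have hNe := hδN k hk
    have hpk : pr rep k (pr rep (k+1) n) = pr rep k n := pr_pr hL hrep (by omega)
    rw [hpk] at hJe
    have hsplit : (pr rep k n : ℝ) - x * (pr rep (k+1) n : ℝ)
        = (((pr rep k n : ℝ) - NL rep k) - x * (((pr rep (k+1) n : ℝ)) - NL rep (k+1)))
          + ((NL rep k : ℝ) - x * NL rep (k+1)) := by ring
    rw [hsplit]
    calc _ ≤ |((pr rep k n : ℝ) - NL rep k) - x * (((pr rep (k+1) n : ℝ)) - NL rep (k+1))|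
          + |(NL rep k : ℝ) - x * NL rep (k+1)| := abs_add_le _ _
      _ ≤ δF := by rw [hδF]; linarith
  -- upper growth of NL
  have hub : ∀ m, l₁ ≤ m → (NL rep m : ℝ) * x^m ≤ (NL rep l₁ : ℝ) + δN * m := by
    apply up_geom hx0.le hx1.le hδN0 (fun k => by positivity)
    intro k hk
    exact hδN k hk
  have hxl0 : (0:ℝ) < x^l₁ := pow_pos hx0 _
  have hNLl₁0 : (0:ℝ) ≤ (NL rep l₁ : ℝ) := by positivity
  set C : ℝ := δF/(1-x) + l₁ * NL rep l₁
      + ((l₁:ℝ)/x^l₁ + lam/x) * ((NL rep l₁ : ℝ) + δN) with hC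
  clear_value C
  have hC0 : 0 ≤ C := by
    rw [hC]
    have t1 : (0:ℝ) ≤ δF/(1-x) := div_nonneg hδF0 h1x.le
    have t2 : (0:ℝ) ≤ (l₁:ℝ) * NL rep l₁ := by positivity
    have t3 : (0:ℝ) ≤ ((l₁:ℝ)/x^l₁ + lam/x) * ((NL rep l₁ : ℝ) + δN) :=
      mul_nonneg (add_nonneg (div_nonneg (by positivity) hxl0.le)
        (div_nonneg hlam0.le hx0.le)) (add_nonneg hNLl₁0 hδN0)
    linarith
  refine ⟨C, hC0, ?_⟩
  intro n hn
  set ℓ := (rep n).length with hℓ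
  have hℓ1 : 1 ≤ ℓ := by omega
  -- the sum formula
  have hS : (∑ i ∈ Finset.range n, (Delta (rep i) (rep (i+1)) : ℝ))
      = ∑ k ∈ Finset.Icc 1 ℓ, (pr rep k n : ℝ) := by
    have h1 := S_formula hL hrep n
    have h2 := congrArg (fun t : ℕ => (t:ℝ)) h1
    push_cast at h2
    rw [hℓ]
    exact h2
  have hFl : (pr rep ℓ n : ℝ) = n := by
    have h0 := pr_self hL hrep n
    rw [hℓ, h0]
  have hnNL : (n:ℝ) ≤ NL rep (ℓ+1) := by
    have h0 : n < NL rep (ℓ+1) := ((len_eq_iff hL hrep).mp hℓ.symm).2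
    exact_mod_cast le_of_lt h0
  clear_value ℓ
  have hdg := down_geom (a := fun k => (pr rep k n : ℝ)) (l₁ := l₁) (l := ℓ)
    hx0.le hx1 hδF0 (fun k hk hkl => by
      have := hF n k hk (by omega)
      simpa using this)
  have hbound1 : ∀ k ∈ Finset.Ico l₁ (ℓ+1), |(pr rep k n : ℝ) - x^(ℓ-k) * n| ≤ δF/(1-x) := by
    intro k hk
    rw [Finset.mem_Ico] at hk
    have := hdg (ℓ - k) k hk.1 (by omega)
    simpa [hFl] using this
  have hn0 : (0:ℝ) ≤ n := by positivity
  set X2 : ℝ := x^(ℓ-l₁+1) * n with hX2def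
  clear_value X2
  have hX20 : 0 ≤ X2 := by
    rw [hX2def]
    exact mul_nonneg (pow_nonneg hx0.le _) hn0
  have hbound2 : ∀ k ∈ Finset.Ico 1 l₁, |(pr rep k n : ℝ) - x^(ℓ-k) * n|
      ≤ (NL rep l₁ : ℝ) + X2 := by
    intro k hk
    rw [Finset.mem_Ico] at hk
    have hprb : (pr rep k n : ℝ) ≤ NL rep l₁ := by
      have h1 : pr rep k n < NL rep (k+1) := pr_lt_NL hL hrep (by omega)
      have h2 : NL rep (k+1) ≤ NL rep l₁ := NL_mono hL hrep (by omega)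
      exact_mod_cast le_of_lt (lt_of_lt_of_le h1 h2)
    have hxp : x^(ℓ-k) * (n:ℝ) ≤ X2 := by
      rw [hX2def]
      apply mul_le_mul_of_nonneg_right _ hn0
      exact pow_le_pow_of_le_one hx0.le hx1.le (by omega)
    have hpr0 : (0:ℝ) ≤ (pr rep k n : ℝ) := by positivity
    have hxn0 : (0:ℝ) ≤ x^(ℓ-k) * n := mul_nonneg (pow_nonneg hx0.le _) hn0
    rw [abs_le]
    constructor
    · linarith
    · linarith
  have hIccIco : Finset.Icc 1 ℓ = Finset.Ico 1 (ℓ+1) := by rw [Finset.Ico_add_one_right_eq_Icc]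
  have hsplitsum : ∑ k ∈ Finset.Ico 1 l₁, |(pr rep k n : ℝ) - x^(ℓ-k) * n|
      + ∑ k ∈ Finset.Ico l₁ (ℓ+1), |(pr rep k n : ℝ) - x^(ℓ-k) * n|
      = ∑ k ∈ Finset.Ico 1 (ℓ+1), |(pr rep k n : ℝ) - x^(ℓ-k) * n| :=
    Finset.sum_Ico_consecutive _ (by omega) (by omega)
  have hδF1x : (0:ℝ) ≤ δF/(1-x) := div_nonneg hδF0 h1x.le
  have hT1 : ∑ k ∈ Finset.Ico l₁ (ℓ+1), |(pr rep k n : ℝ) - x^(ℓ-k) * n|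
      ≤ ((ℓ:ℝ)+1) * (δF/(1-x)) := by
    calc ∑ k ∈ Finset.Ico l₁ (ℓ+1), |(pr rep k n : ℝ) - x^(ℓ-k) * n|
        ≤ (Finset.Ico l₁ (ℓ+1)).card • (δF/(1-x)) := Finset.sum_le_card_nsmul _ _ _ hbound1
      _ = ((Finset.Ico l₁ (ℓ+1)).card : ℝ) * (δF/(1-x)) := nsmul_eq_mul _ _
      _ ≤ ((ℓ:ℝ)+1) * (δF/(1-x)) := by
          apply mul_le_mul_of_nonneg_right _ hδF1x
          rw [Nat.card_Ico]
          have h3 : ℓ + 1 - l₁ ≤ ℓ + 1 := by omega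
          calc ((ℓ + 1 - l₁ : ℕ) : ℝ) ≤ ((ℓ + 1 : ℕ) : ℝ) := by exact_mod_cast h3
            _ = (ℓ:ℝ) + 1 := by push_cast; ring
  have hT2 : ∑ k ∈ Finset.Ico 1 l₁, |(pr rep k n : ℝ) - x^(ℓ-k) * n|
      ≤ (l₁:ℝ) * ((NL rep l₁ : ℝ) + X2) := by
    calc ∑ k ∈ Finset.Ico 1 l₁, |(pr rep k n : ℝ) - x^(ℓ-k) * n|
        ≤ (Finset.Ico 1 l₁).card • ((NL rep l₁ : ℝ) + X2) := Finset.sum_le_card_nsmul _ _ _ hbound2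
      _ = ((Finset.Ico 1 l₁).card : ℝ) * ((NL rep l₁ : ℝ) + X2) := nsmul_eq_mul _ _
      _ ≤ (l₁:ℝ) * ((NL rep l₁ : ℝ) + X2) := by
          apply mul_le_mul_of_nonneg_right _ (by linarith)
          rw [Nat.card_Ico]
          exact_mod_cast (by omega : l₁ - 1 ≤ l₁)
  have hG : ∑ k ∈ Finset.Icc 1 ℓ, x^(ℓ-k) = ∑ i ∈ Finset.range ℓ, x^i := sum_pow_Icc x ℓ
  have hgeom : ∑ i ∈ Finset.range ℓ, x^i = (x^ℓ - 1)/(x - 1) := geom_sum_eq (by linarith) ℓ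
  have hcinv : (1 - x)⁻¹ * (1 - x) = 1 := inv_mul_cancel₀ h1xne
  have hGl : (x^ℓ - 1)/(x - 1) = lam * (1 - x^ℓ) := by
    rw [hlam, one_div, div_eq_iff (sub_ne_zero.mpr (ne_of_lt hx1))]
    linear_combination (1 - x^ℓ) * hcinv
  have hT3 : |(∑ k ∈ Finset.Icc 1 ℓ, x^(ℓ-k) * (n:ℝ)) - lam * n| ≤ lam * (x^ℓ * n) := by
    rw [← Finset.sum_mul, hG, hgeom, hGl]
    have heq : lam * (1 - x^ℓ) * (n:ℝ) - lam * n = -(lam * (x^ℓ * n)) := by ring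
    rw [heq, abs_neg, abs_of_nonneg (mul_nonneg hlam0.le
      (mul_nonneg (pow_nonneg hx0.le _) hn0))]
  have hUB := hub (ℓ+1) (by omega)
  push_cast at hUB
  have hXl : x^(ℓ+1) = x^(ℓ-l₁+1) * x^l₁ := by
    rw [← pow_add]
    congr 1
    omega
  set B : ℝ := (NL rep l₁ : ℝ) + δN * ((ℓ:ℝ)+1) with hBdef
  clear_value B
  have hB0 : 0 ≤ B := by
    rw [hBdef]
    have : (0:ℝ) ≤ δN * ((ℓ:ℝ)+1) := mul_nonneg hδN0 (by positivity)
    linarith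
  have hxx : x^(ℓ+1) * (n:ℝ) ≤ B := by
    calc x^(ℓ+1) * (n:ℝ) ≤ x^(ℓ+1) * NL rep (ℓ+1) :=
          mul_le_mul_of_nonneg_left hnNL (pow_nonneg hx0.le _)
      _ = (NL rep (ℓ+1) : ℝ) * x^(ℓ+1) := by ring
      _ ≤ B := by rw [hBdef]; linarith [hUB]
  have hX2b : X2 ≤ B / x^l₁ := by
    rw [hX2def, le_div_iff₀ hxl0]
    calc x^(ℓ-l₁+1) * (n:ℝ) * x^l₁ = x^(ℓ+1) * n := by rw [hXl]; ring
      _ ≤ B := hxx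
  have hT3b : lam * (x^ℓ * (n:ℝ)) ≤ lam * (B / x) := by
    apply mul_le_mul_of_nonneg_left _ hlam0.le
    rw [le_div_iff₀ hx0]
    calc x^ℓ * (n:ℝ) * x = x^(ℓ+1) * n := by ring
      _ ≤ B := hxx
  -- assembly
  rw [hS, hlameq]
  have hdecomp : (∑ k ∈ Finset.Icc 1 ℓ, (pr rep k n : ℝ)) - lam * n
      = (∑ k ∈ Finset.Icc 1 ℓ, ((pr rep k n : ℝ) - x^(ℓ-k) * n))
        + ((∑ k ∈ Finset.Icc 1 ℓ, x^(ℓ-k) * (n:ℝ)) - lam * n) := by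
    rw [Finset.sum_sub_distrib]
    ring
  have hmain : |(∑ k ∈ Finset.Icc 1 ℓ, (pr rep k n : ℝ)) - lam * n|
      ≤ ((ℓ:ℝ)+1) * (δF/(1-x)) + (l₁:ℝ) * ((NL rep l₁ : ℝ) + X2) + lam * (B / x) := by
    calc |(∑ k ∈ Finset.Icc 1 ℓ, (pr rep k n : ℝ)) - lam * n|
        ≤ |∑ k ∈ Finset.Icc 1 ℓ, ((pr rep k n : ℝ) - x^(ℓ-k) * n)|
          + |(∑ k ∈ Finset.Icc 1 ℓ, x^(ℓ-k) * (n:ℝ)) - lam * n| := by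
          rw [hdecomp]; exact abs_add_le _ _
      _ ≤ (∑ k ∈ Finset.Icc 1 ℓ, |(pr rep k n : ℝ) - x^(ℓ-k) * n|) + lam * (x^ℓ * n) :=
          add_le_add (Finset.abs_sum_le_sum_abs _ _) hT3
      _ ≤ (((ℓ:ℝ)+1) * (δF/(1-x)) + (l₁:ℝ) * ((NL rep l₁ : ℝ) + X2)) + lam * (B/x) := by
          apply add_le_add _ hT3b
          rw [hIccIco, ← hsplitsum]
          linarith
      _ = ((ℓ:ℝ)+1) * (δF/(1-x)) + (l₁:ℝ) * ((NL rep l₁ : ℝ) + X2) + lam * (B / x) := by ring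
  -- final constant comparison
  have hL1 : (1:ℝ) ≤ (ℓ:ℝ) + 1 := by
    have : (0:ℝ) ≤ (ℓ:ℝ) := by positivity
    linarith
  have hBb : B ≤ ((NL rep l₁ : ℝ) + δN) * ((ℓ:ℝ)+1) := by
    rw [hBdef]
    have h1 : (NL rep l₁ : ℝ) ≤ (NL rep l₁ : ℝ) * ((ℓ:ℝ)+1) :=
      le_mul_of_one_le_right hNLl₁0 hL1
    have h2 : ((NL rep l₁ : ℝ) + δN) * ((ℓ:ℝ)+1)
        = (NL rep l₁ : ℝ) * ((ℓ:ℝ)+1) + δN * ((ℓ:ℝ)+1) := by ring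
    linarith
  have hl₁0 : (0:ℝ) ≤ (l₁:ℝ) := by positivity
  have hfin : ((ℓ:ℝ)+1) * (δF/(1-x)) + (l₁:ℝ) * ((NL rep l₁ : ℝ) + X2) + lam * (B / x)
      ≤ C * ((ℓ:ℝ)+1) := by
    rw [hC]
    have e1 : (l₁:ℝ) * (NL rep l₁ : ℝ) ≤ (l₁:ℝ) * (NL rep l₁ : ℝ) * ((ℓ:ℝ)+1) :=
      le_mul_of_one_le_right (by positivity) hL1
    have e2 : (l₁:ℝ) * X2 ≤ (l₁:ℝ)/x^l₁ * (((NL rep l₁ : ℝ) + δN) * ((ℓ:ℝ)+1)) := by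
      have h1 : (l₁:ℝ) * X2 ≤ (l₁:ℝ) * (B / x^l₁) :=
        mul_le_mul_of_nonneg_left hX2b hl₁0
      have h2 : (l₁:ℝ) * (B / x^l₁) = (l₁:ℝ)/x^l₁ * B := by ring
      have h3 : (l₁:ℝ)/x^l₁ * B ≤ (l₁:ℝ)/x^l₁ * (((NL rep l₁ : ℝ) + δN) * ((ℓ:ℝ)+1)) :=
        mul_le_mul_of_nonneg_left hBb (div_nonneg hl₁0 hxl0.le)
      linarith
    have e3 : lam * (B / x) ≤ lam/x * (((NL rep l₁ : ℝ) + δN) * ((ℓ:ℝ)+1)) := by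
      have h2 : lam * (B / x) = lam/x * B := by ring
      have h3 : lam/x * B ≤ lam/x * (((NL rep l₁ : ℝ) + δN) * ((ℓ:ℝ)+1)) :=
        mul_le_mul_of_nonneg_left hBb (div_nonneg hlam0.le hx0.le)
      linarith
    have hexp : (δF/(1-x) + (l₁:ℝ) * (NL rep l₁ : ℝ) + ((l₁:ℝ)/x^l₁ + lam/x) * ((NL rep l₁ : ℝ) + δN)) * ((ℓ:ℝ)+1)
        = (δF/(1-x)) * ((ℓ:ℝ)+1) + (l₁:ℝ) * (NL rep l₁ : ℝ) * ((ℓ:ℝ)+1)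
          + (l₁:ℝ)/x^l₁ * (((NL rep l₁ : ℝ) + δN) * ((ℓ:ℝ)+1))
          + lam/x * (((NL rep l₁ : ℝ) + δN) * ((ℓ:ℝ)+1)) := by ring
    have hlhs : (l₁:ℝ) * ((NL rep l₁ : ℝ) + X2) = (l₁:ℝ) * (NL rep l₁ : ℝ) + (l₁:ℝ) * X2 := by
      ring
    rw [hexp]
    linarith [e1, e2, e3]
  calc |(∑ k ∈ Finset.Icc 1 ℓ, (pr rep k n : ℝ)) - lam * n|
      ≤ ((ℓ:ℝ)+1) * (δF/(1-x)) + (l₁:ℝ) * ((NL rep l₁ : ℝ) + X2) + lam * (B / x) := hmain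
    _ ≤ C * ((ℓ:ℝ)+1) := hfin

lemma growth : ∃ (ℓ₃ : ℕ) (c θ : ℝ), max n₀ 1 ≤ ℓ₃ ∧ 0 < c ∧ 1 < θ ∧
    ∀ ℓ, ℓ₃ ≤ ℓ → c * θ^ℓ ≤ NL rep ℓ := by
  classical
  obtain ⟨δN, hδN0, hδN⟩ := N_step_est hL hrep hq hpq hper hsum hsig
  have hp0 : (0:ℝ) < p := by exact_mod_cast (by omega : 0 < p)
  have hq0 : (0:ℝ) < q := by exact_mod_cast (by omega : 0 < q)
  have hqp : (q:ℝ) < p := by exact_mod_cast hpq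
  set x : ℝ := (q:ℝ) / p with hx
  clear_value x
  have hx0 : 0 < x := by rw [hx]; positivity
  have hx1 : x < 1 := by rw [hx, div_lt_one hp0]; exact hqp
  set ρ : ℝ := (p:ℝ)/q with hρdef
  clear_value ρ
  have hρ1 : 1 < ρ := by rw [hρdef, lt_div_iff₀ hq0]; linarith
  have hxρ : x * ρ = 1 := by
    rw [hx, hρdef]
    field_simp
  set θ : ℝ := (1+ρ)/2 with hθdef
  clear_value θ
  have hθ1 : 1 < θ := by rw [hθdef]; linarith
  have hθρ : θ < ρ := by rw [hθdef]; linarith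
  set M : ℝ := δN * ρ / (ρ - θ) with hM
  clear_value M
  obtain ⟨m₀, hm₀⟩ := exists_nat_ge M
  set ℓ₃ := max (max n₀ 1) m₀ with hℓ₃
  clear_value ℓ₃
  have hstep : ∀ k, ℓ₃ ≤ k → θ * NL rep k ≤ NL rep (k+1) := by
    intro k hk
    have h1 := hδN k (by omega)
    rw [abs_le] at h1
    have hNLM : M ≤ (NL rep k : ℝ) := by
      have h2 : (m₀ : ℝ) ≤ NL rep k := by
        exact_mod_cast le_trans (by omega : m₀ ≤ k) (NL_ge hL hrep k)
      linarith
    -- NL k - δN ≤ x * NL (k+1);  θ * x ≤ ... ; multiply by ρ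
    have h3 : (NL rep k : ℝ) - δN ≤ x * NL rep (k+1) := by linarith
    have h4 : ρ * ((NL rep k : ℝ) - δN) ≤ ρ * (x * NL rep (k+1)) :=
      mul_le_mul_of_nonneg_left h3 (by linarith)
    have h5 : ρ * (x * NL rep (k+1)) = (NL rep (k+1) : ℝ) := by
      rw [show ρ * (x * (NL rep (k+1) : ℝ)) = (x * ρ) * NL rep (k+1) by ring, hxρ, one_mul]
    rw [h5] at h4
    -- θ NL k ≤ ρ NL k - ρ δN  ⟸  (ρ - θ) NL k ≥ ρ δN  ⟸ NL k ≥ M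
    have h6 : (ρ - θ) * M ≤ (ρ - θ) * NL rep k := mul_le_mul_of_nonneg_left hNLM (by linarith)
    have h7 : (ρ - θ) * M = δN * ρ := by
      have hρθ : (ρ - θ) ≠ 0 := ne_of_gt (by linarith)
      rw [hM]
      field_simp
    have h8 : θ * (NL rep k : ℝ) ≤ ρ * ((NL rep k : ℝ) - δN) := by nlinarith
    linarith
  have hθl0 : (0:ℝ) < θ^ℓ₃ := pow_pos (by linarith) _
  refine ⟨ℓ₃, (NL rep ℓ₃ : ℝ)/θ^ℓ₃, θ, by omega, ?_, hθ1, ?_⟩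
  · apply div_pos _ hθl0
    have h9 : 1 ≤ NL rep ℓ₃ := le_trans (by omega) (NL_ge hL hrep ℓ₃)
    exact_mod_cast (by omega : 0 < NL rep ℓ₃)
  · intro ℓ hℓ
    induction ℓ, hℓ using Nat.le_induction with
    | base =>
      rw [div_mul_cancel₀ _ (ne_of_gt hθl0)]
    | succ ℓ hℓ ih =>
      have h1 := hstep ℓ hℓ
      have h2 : (NL rep ℓ₃ : ℝ)/θ^ℓ₃ * θ^(ℓ+1) = θ * ((NL rep ℓ₃ : ℝ)/θ^ℓ₃ * θ^ℓ) := by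
        rw [pow_succ]
        ring
      rw [h2]
      calc θ * ((NL rep ℓ₃ : ℝ)/θ^ℓ₃ * θ^ℓ) ≤ θ * NL rep ℓ := by
            apply mul_le_mul_of_nonneg_left ih (by linarith)
        _ ≤ NL rep (ℓ+1) := h1

end Analysis

open Filter Topology in
theorem carry_stmt13' {A : Type*} [Fintype A] [LinearOrder A]
    (L : Set (List A)) (hL : PCE L)
    (rep : ℕ → List A) (hrep : RadixEnum L rep)
    (p q : ℕ) (hq : 1 ≤ q) (hpq : q < p)
    (r : ℕ → ℕ) (hper : ∀ i, r (i + q) = r i)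
    (hsum : ∑ i ∈ Finset.range q, r i = p)
    (n₀ : ℕ) (hsig : ∀ n ≥ n₀, signature L rep n = r (n - n₀)) :
    Tendsto
      (fun N : ℕ => (∑ i ∈ Finset.range N, (Delta (rep i) (rep (i + 1)) : ℝ)) / N)
      atTop (nhds ((p : ℝ) / ((p : ℝ) - (q : ℝ)))) := by
  classical
  obtain ⟨C, hC0, hmaster⟩ := CarryAux.master hL hrep hq hpq hper hsum hsig
  obtain ⟨ℓ₃, c, θ, hℓ₃M, hc0, hθ1, hgrow⟩ := CarryAux.growth hL hrep hq hpq hper hsum hsig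
  rw [Metric.tendsto_atTop]
  intro ε hε
  have hθ0 : (0:ℝ) < θ := by linarith
  have hθne : θ ≠ 0 := ne_of_gt hθ0
  have h1 : Tendsto (fun m : ℕ => ((m:ℝ)+1)/θ^m) atTop (𝓝 0) := by
    have h2 : Tendsto (fun m : ℕ => θ * (((m+1:ℕ):ℝ)^1/θ^(m+1))) atTop (𝓝 (θ * 0)) :=
      ((tendsto_pow_const_div_const_pow_of_one_lt 1 hθ1).comp
        (Filter.tendsto_add_atTop_nat 1)).const_mul θ
    rw [mul_zero] at h2
    apply h2.congr
    intro m
    rw [pow_one]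
    push_cast
    rw [pow_succ]
    field_simp
  have hcg : 0 < ε * c / (C+1) := by positivity
  have h2 := h1.eventually_lt_const hcg
  obtain ⟨m₁, hm₁⟩ := Filter.eventually_atTop.mp h2
  refine ⟨NL rep (max ℓ₃ m₁), fun n hn => ?_⟩
  have hlen : max ℓ₃ m₁ ≤ (rep n).length := (CarryAux.NL_le_iff hL hrep).mp hn
  set ℓ := (rep n).length with hℓ
  have hm : max n₀ 1 ≤ ℓ := le_trans hℓ₃M (le_trans (le_max_left _ _) hlen)
  have hmas := hmaster n hm
  have hgr := hgrow ℓ (le_trans (le_max_left _ _) hlen)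
  have hNn : NL rep ℓ ≤ n := ((CarryAux.len_eq_iff hL hrep).mp hℓ.symm).1
  have hθp : (0:ℝ) < θ^ℓ := pow_pos hθ0 _
  have hcθ : (0:ℝ) < c * θ^ℓ := by positivity
  have hn0 : (0:ℝ) < n := by
    have h3 : (NL rep ℓ : ℝ) ≤ n := by exact_mod_cast hNn
    linarith
  rw [Real.dist_eq]
  have hdiv : (∑ i ∈ Finset.range n, (Delta (rep i) (rep (i+1)) : ℝ)) / n
        - (p:ℝ)/((p:ℝ)-(q:ℝ))
      = ((∑ i ∈ Finset.range n, (Delta (rep i) (rep (i+1)) : ℝ))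
          - ((p:ℝ)/((p:ℝ)-(q:ℝ))) * n)/n := by
    field_simp
  rw [hdiv, abs_div, abs_of_pos hn0]
  rw [← hℓ] at hmas
  have hcn : c * θ^ℓ ≤ (n:ℝ) := by
    have h3 : (NL rep ℓ : ℝ) ≤ n := by exact_mod_cast hNn
    linarith
  have hnum0 : (0:ℝ) ≤ C * ((ℓ:ℝ)+1) := by positivity
  have hC1 : (0:ℝ) < C + 1 := by linarith
  calc |(∑ i ∈ Finset.range n, (Delta (rep i) (rep (i+1)) : ℝ))
        - ((p:ℝ)/((p:ℝ)-(q:ℝ))) * n| / n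
      ≤ (C * ((ℓ:ℝ)+1))/n := (div_le_div_iff_of_pos_right hn0).mpr hmas
    _ ≤ (C * ((ℓ:ℝ)+1))/(c * θ^ℓ) := div_le_div_of_nonneg_left hnum0 hcθ hcn
    _ = (C/c) * (((ℓ:ℝ)+1)/θ^ℓ) := by rw [← div_mul_div_comm]
    _ ≤ ((C+1)/c) * (((ℓ:ℝ)+1)/θ^ℓ) := by
        apply mul_le_mul_of_nonneg_right _ (div_nonneg (by positivity) hθp.le)
        exact (div_le_div_iff_of_pos_right hc0).mpr (by linarith)
    _ < ((C+1)/c) * (ε * c/(C+1)) :=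
        mul_lt_mul_of_pos_left (hm₁ ℓ (le_trans (le_max_right _ _) hlen)) (by positivity)
    _ = ε := by
        field_simp

end CarryAux

/-- If a PCE language `L` has an eventually periodic signature whose periodic
rhythm has directing parameter `(q, p)` (a `q`-periodic sequence of nonnegative
integers summing to `p` over one period, `p > q ≥ 1`), then the carry propagation
`CP(L) = lim (1/N) ∑_{i<N} cp_L(i)` exists and equals `p / (p - q)`. -/
theorem carry_stmt13 {A : Type*} [Fintype A] [LinearOrder A]
    (L : Set (List A)) (hL : PCE L)
    (rep : ℕ → List A) (hrep : RadixEnum L rep)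
    (p q : ℕ) (hq : 1 ≤ q) (hpq : q < p)
    (r : ℕ → ℕ) (hper : ∀ i, r (i + q) = r i)
    (hsum : ∑ i ∈ Finset.range q, r i = p)
    (n₀ : ℕ) (hsig : ∀ n ≥ n₀, signature L rep n = r (n - n₀)) :
    Tendsto
      (fun N : ℕ => (∑ i ∈ Finset.range N, (Delta (rep i) (rep (i + 1)) : ℝ)) / N)
      atTop (nhds ((p : ℝ) / ((p : ℝ) - (q : ℝ)))) :=
  CarryAux.carry_stmt13' L hL rep hrep p q hq hpq r hper hsum n₀ hsig
end

section
/- Let G = (G_ℓ) be a basis for a greedy numeration system (strictly increasing, G_0 = 1) and μ any τ_G-invariant Borel probability measure on the compactification K_G. Then for every ℓ, μ([g_ℓ]) ≤ 1/G_ℓ, where g_ℓ is the greedy G-expansion of G_ℓ − 1 and [g_ℓ] is the cylinder of left-infinite sequences in K_G ending in g_ℓ. -/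
open Filter Topology

/-- Remainders of the greedy algorithm for the basis `G`, run top-down from
position `N - 1` (for `N < G N`, all digits of `N` lie below position `N`):
`greedyRem G N t` is the part of `N` remaining to be represented on the
positions `< N - t`. -/
def greedyRem (G : ℕ → ℕ) (N : ℕ) : ℕ → ℕ
  | 0 => N
  | t + 1 => greedyRem G N t % G (N - t - 1)

/-- The digit at position `j` (least significant digit at position `0`) of the
greedy `G`-expansion of `N`, padded with zeros. -/
def greedyDigit (G : ℕ → ℕ) (N j : ℕ) : ℕ :=
  if j < N then greedyRem G N (N - 1 - j) / G j else 0

/-- The compactification `K_G` of the greedy numeration system `G`: the set of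
left-infinite words (written with digit `s i` at position `i`) all of whose
finite suffixes `s_{[j,0]}` are zero-padded greedy `G`-expansions. -/
def greedyCompactification (G : ℕ → ℕ) : Set (ℕ → ℕ) :=
  {s | ∀ j, ∃ N, ∀ i ≤ j, s i = greedyDigit G N i}

namespace CarryAux

/-- remainder entering position `k` of the greedy algorithm on `X`. -/
def R (G : ℕ → ℕ) (X k : ℕ) : ℕ := if k < X then greedyRem G X (X - 1 - k) else X

variable {G : ℕ → ℕ}

lemma Ggt (hG : StrictMono G) (hG0 : G 0 = 1) : ∀ n, n < G n := by
  intro n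
  induction n with
  | zero => omega
  | succ n ih =>
    have := hG (show n < n + 1 by omega)
    show n + 1 < G (n + 1)
    omega

lemma R_rec (hG : StrictMono G) (hG0 : G 0 = 1) (X k : ℕ) :
    R G X k = R G X (k + 1) % G (k + 1) := by
  rcases lt_trichotomy (k + 1) X with h | h | h
  · have h1 : k < X := by omega
    simp only [R, if_pos h1, if_pos h]
    have h2 : X - 1 - k = (X - 2 - k) + 1 := by omega
    rw [h2, greedyRem]
    have h3 : X - (X - 2 - k) - 1 = k + 1 := by omega
    have h4 : X - 1 - (k + 1) = X - 2 - k := by omega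
    rw [h3, h4]
  · have h1 : k < X := by omega
    have h2 : X - 1 - k = 0 := by omega
    have h3 : ¬ (k + 1 < X) := by omega
    simp only [R, if_pos h1, if_neg h3, h2, greedyRem]
    rw [← h]
    exact (Nat.mod_eq_of_lt (Ggt hG hG0 (k + 1))).symm
  · have h1 : ¬ (k < X) := by omega
    have h3 : ¬ (k + 1 < X) := by omega
    simp only [R, if_neg h1, if_neg h3]
    have hx : X < G (k + 1) := lt_of_le_of_lt (by omega) (Ggt hG hG0 (k + 1))
    exact (Nat.mod_eq_of_lt hx).symm

lemma R_lt (hG : StrictMono G) (hG0 : G 0 = 1) (X k : ℕ) : R G X k < G (k + 1) := by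
  rw [R_rec hG hG0]
  exact Nat.mod_lt _ (by have := Ggt hG hG0 (k + 1); omega)

lemma R_eq_self_aux (hG : StrictMono G) (hG0 : G 0 = 1) (X : ℕ) :
    ∀ d k, X ≤ k + d → X < G (k + 1) → R G X k = X := by
  intro d
  induction d with
  | zero =>
    intro k hk _
    simp only [R]
    rw [if_neg (by omega)]
  | succ d ih =>
    intro k hk hlt
    by_cases hxk : k < X
    · rw [R_rec hG hG0, ih (k + 1) (by omega) (lt_trans hlt (hG (by omega)))]
      exact Nat.mod_eq_of_lt hlt
    · simp only [R, if_neg hxk]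

lemma R_eq_self (hG : StrictMono G) (hG0 : G 0 = 1) {X k : ℕ} (h : X < G (k + 1)) :
    R G X k = X :=
  R_eq_self_aux hG hG0 X X k (by omega) h

lemma R_succ_aux (hG : StrictMono G) (hG0 : G 0 = 1) (X : ℕ) :
    ∀ d k, X + 1 ≤ k + d → R G (X + 1) k = R G X k + 1 ∨ R G (X + 1) k = 0 := by
  intro d
  induction d with
  | zero =>
    intro k hk
    left
    simp only [R, if_neg (show ¬ k < X + 1 by omega), if_neg (show ¬ k < X by omega)]
  | succ d ih =>
    intro k hk
    by_cases hks : X + 1 ≤ k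
    · left
      simp only [R, if_neg (show ¬ k < X + 1 by omega), if_neg (show ¬ k < X by omega)]
    rw [R_rec hG hG0 (X + 1) k, R_rec hG hG0 X k]
    rcases ih (k + 1) (by omega) with hb | h0
    · rw [hb]
      set b := R G X (k + 1) with hbdef
      set m := G (k + 1) with hmdef
      have hm2 : 1 < m := by have := Ggt hG hG0 (k + 1); omega
      have hmod : (b + 1) % m = (b % m + 1) % m := by
        conv_lhs => rw [Nat.add_mod]
        rw [Nat.mod_eq_of_lt (show (1:ℕ) < m from hm2)]
      have hbm : b % m < m := Nat.mod_lt _ (by omega)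
      by_cases hlt : b % m + 1 < m
      · left
        rw [hmod, Nat.mod_eq_of_lt hlt]
      · right
        have heq : b % m + 1 = m := by omega
        rw [hmod, heq, Nat.mod_self]
    · right
      rw [h0]
      simp

lemma R_R_aux (hG : StrictMono G) (hG0 : G 0 = 1) (X j : ℕ) :
    ∀ d k, j ≤ k + d → k ≤ j → R G (R G X j) k = R G X k := by
  intro d
  induction d with
  | zero =>
    intro k hk hkj
    have : k = j := by omega
    subst this
    exact R_eq_self hG hG0 (R_lt hG hG0 X k)
  | succ d ih =>
    intro k hk hkj
    rcases eq_or_lt_of_le hkj with heq | hlt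
    · subst heq
      exact R_eq_self hG hG0 (R_lt hG hG0 X k)
    · rw [R_rec hG hG0 (R G X j) k, R_rec hG hG0 X k, ih (k + 1) (by omega) hlt]

lemma digit_eq (hG : StrictMono G) (hG0 : G 0 = 1) (X j : ℕ) :
    greedyDigit G X j = R G X j / G j := by
  unfold greedyDigit R
  by_cases h : j < X
  · simp [h]
  · rw [if_neg h, if_neg h]
    exact (Nat.div_eq_of_lt (lt_of_le_of_lt (not_lt.mp h) (Ggt hG hG0 j))).symm

lemma sum_digits (hG : StrictMono G) (hG0 : G 0 = 1) (X : ℕ) :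
    ∀ m, ∑ t ∈ Finset.range (m + 1), greedyDigit G X t * G t = R G X m := by
  intro m
  induction m with
  | zero => simp [Finset.sum_range_one, digit_eq hG hG0, hG0]
  | succ m ih =>
    rw [Finset.sum_range_succ, ih, digit_eq hG hG0]
    rw [R_rec hG hG0 X m]
    exact Nat.mod_add_div' _ _

lemma R_succ (hG : StrictMono G) (hG0 : G 0 = 1) (X k : ℕ) :
    R G (X + 1) k = R G X k + 1 ∨ R G (X + 1) k = 0 :=
  R_succ_aux hG hG0 X (X + 1) k (by omega)

lemma R_R (hG : StrictMono G) (hG0 : G 0 = 1) (X : ℕ) {j k : ℕ} (h : k ≤ j) :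
    R G (R G X j) k = R G X k :=
  R_R_aux hG hG0 X j j k (by omega) h

end CarryAux

/-- For a greedy numeration system with basis `G` (strictly increasing,
`G 0 = 1`), any odometer `τ` (i.e. `τ s = lim_j Succ(s_{[j,0]})` pointwise on
`K_G`) and any `τ`-invariant Borel probability measure `μ` carried by `K_G`,
the cylinder of `g_ℓ = rep_G(G_ℓ - 1)` has measure at most `1 / G_ℓ`. -/
theorem carry_stmt17 (G : ℕ → ℕ) (hG : StrictMono G) (hG0 : G 0 = 1)
    (τ : (ℕ → ℕ) → (ℕ → ℕ))
    (hτmem : Set.MapsTo τ (greedyCompactification G) (greedyCompactification G))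
    (hτ : ∀ s ∈ greedyCompactification G, ∀ i : ℕ, ∀ᶠ j : ℕ in atTop,
      greedyDigit G ((∑ t ∈ Finset.range (j + 1), s t * G t) + 1) i = τ s i)
    (μ : MeasureTheory.Measure (ℕ → ℕ)) [MeasureTheory.IsProbabilityMeasure μ]
    (hsupp : μ (greedyCompactification G)ᶜ = 0)
    (hinv : ∀ B : Set (ℕ → ℕ), MeasurableSet B → μ (τ ⁻¹' B) = μ B)
    (ℓ : ℕ) :
    μ {s ∈ greedyCompactification G | ∀ j < ℓ, s j = greedyDigit G (G ℓ - 1) j}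
      ≤ (G ℓ : ENNReal)⁻¹ := by
  classical
  rcases Nat.eq_zero_or_pos ℓ with hl0 | hl
  · subst hl0
    have h1 : ((G 0 : ℕ) : ENNReal)⁻¹ = 1 := by rw [hG0]; simp
    rw [h1]
    exact MeasureTheory.prob_le_one
  obtain ⟨L, rfl⟩ : ∃ L, ℓ = L + 1 := ⟨ℓ - 1, by omega⟩
  set K := greedyCompactification G with hK
  set lv : (ℕ → ℕ) → ℕ := fun s => ∑ t ∈ Finset.range (L + 1), s t * G t with hlv
  set A : ℕ → Set (ℕ → ℕ) := fun i => {s | s ∈ K ∧ lv s = i} with hA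
  have hKmeas : MeasurableSet K := by
    have hKeq : K = ⋂ j, ⋃ N, ⋂ i ∈ Set.Iic j, {s : ℕ → ℕ | s i = greedyDigit G N i} := by
      ext s
      simp [hK, greedyCompactification]
    rw [hKeq]
    exact MeasurableSet.iInter fun j => MeasurableSet.iUnion fun N =>
      MeasurableSet.biInter (Set.to_countable _) fun i _ => by
        show MeasurableSet ((fun s : ℕ → ℕ => s i) ⁻¹' {greedyDigit G N i})
        exact (measurable_pi_apply i) (measurableSet_singleton _)
  have hlvmeas : Measurable lv := by
    apply Finset.measurable_sum
    intro t _
    exact (Measurable.of_discrete (f := fun n : ℕ => n * G t)).comp (measurable_pi_apply t)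
  have hAmeas : ∀ i, MeasurableSet (A i) :=
    fun i => hKmeas.inter (hlvmeas (measurableSet_singleton i))
  have key : ∀ s ∈ K, lv s < G (L + 1) ∧ (lv (τ s) = lv s + 1 ∨ lv (τ s) = 0) := by
    intro s hs
    have hev : ∀ᶠ j in atTop, ∀ i ∈ Finset.range (L + 1),
        greedyDigit G ((∑ t ∈ Finset.range (j + 1), s t * G t) + 1) i = τ s i :=
      (Filter.eventually_all_finset _).mpr (fun i _ => hτ s hs i)
    obtain ⟨j, hjL, hj⟩ := ((eventually_ge_atTop (L + 1)).and hev).exists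
    obtain ⟨N, hN⟩ := hs j
    have hS : (∑ t ∈ Finset.range (j + 1), s t * G t) = CarryAux.R G N j := by
      rw [← CarryAux.sum_digits hG hG0 N j]
      exact Finset.sum_congr rfl fun t ht => by
        rw [hN t (Nat.lt_succ_iff.mp (Finset.mem_range.mp ht))]
    have hlvs : lv s = CarryAux.R G N L := by
      have h1 : lv s = ∑ t ∈ Finset.range (L + 1), greedyDigit G N t * G t :=
        Finset.sum_congr rfl fun t ht => by
          rw [hN t (by have := Finset.mem_range.mp ht; omega)]
      rw [h1, CarryAux.sum_digits hG hG0]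
    constructor
    · rw [hlvs]
      exact CarryAux.R_lt hG hG0 N L
    have hlvτ : lv (τ s) = CarryAux.R G (CarryAux.R G N j + 1) L := by
      have h1 : lv (τ s) = ∑ t ∈ Finset.range (L + 1),
          greedyDigit G (CarryAux.R G N j + 1) t * G t :=
        Finset.sum_congr rfl fun t ht => by rw [← hj t ht, hS]
      rw [h1, CarryAux.sum_digits hG hG0]
    rcases CarryAux.R_succ hG hG0 (CarryAux.R G N j) L with h | h
    · left
      rw [hlvτ, h, CarryAux.R_R hG hG0 N (by omega), hlvs]
    · right
      rw [hlvτ, h]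
  have step : ∀ i, μ (A (i + 1)) ≤ μ (A i) := by
    intro i
    have hsub : τ ⁻¹' (A (i + 1)) ⊆ A i ∪ Kᶜ := by
      intro s hsp
      by_cases hsK : s ∈ K
      · left
        refine ⟨hsK, ?_⟩
        have h2 : lv (τ s) = i + 1 := hsp.2
        rcases (key s hsK).2 with h | h <;> omega
      · right; exact hsK
    calc μ (A (i + 1)) = μ (τ ⁻¹' (A (i + 1))) := (hinv _ (hAmeas _)).symm
      _ ≤ μ (A i ∪ Kᶜ) := MeasureTheory.measure_mono hsub
      _ ≤ μ (A i) + μ Kᶜ := MeasureTheory.measure_union_le _ _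
      _ = μ (A i) := by rw [hsupp, add_zero]
  have hanti : Antitone fun i => μ (A i) := antitone_nat_of_succ_le step
  have hdisj : (↑(Finset.range (G (L + 1))) : Set ℕ).PairwiseDisjoint A := by
    intro a _ b _ hab
    refine Set.disjoint_left.mpr fun {s} hsa hsb => hab ?_
    rw [← hsa.2, ← hsb.2]
  have hsum : ∑ i ∈ Finset.range (G (L + 1)), μ (A i) ≤ 1 := by
    rw [← MeasureTheory.measure_biUnion_finset hdisj (fun i _ => hAmeas i)]
    exact MeasureTheory.prob_le_one
  have hGpos : 0 < G (L + 1) := by have := CarryAux.Ggt hG hG0 (L + 1); omega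
  have hcount : (G (L + 1) : ENNReal) * μ (A (G (L + 1) - 1)) ≤ 1 := by
    calc (G (L + 1) : ENNReal) * μ (A (G (L + 1) - 1))
        = ∑ _i ∈ Finset.range (G (L + 1)), μ (A (G (L + 1) - 1)) := by
          rw [Finset.sum_const, Finset.card_range, nsmul_eq_mul]
      _ ≤ ∑ i ∈ Finset.range (G (L + 1)), μ (A i) :=
          Finset.sum_le_sum fun i hi =>
            hanti (show i ≤ G (L + 1) - 1 by have := Finset.mem_range.mp hi; omega)
      _ ≤ 1 := hsum
  have hsubT : {s ∈ K | ∀ j < L + 1, s j = greedyDigit G (G (L + 1) - 1) j}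
      ⊆ A (G (L + 1) - 1) := by
    intro s hsT
    refine ⟨hsT.1, ?_⟩
    have heq : lv s = ∑ t ∈ Finset.range (L + 1), greedyDigit G (G (L + 1) - 1) t * G t :=
      Finset.sum_congr rfl fun t ht => by rw [hsT.2 t (Finset.mem_range.mp ht)]
    rw [heq, CarryAux.sum_digits hG hG0,
      CarryAux.R_eq_self hG hG0 (show G (L + 1) - 1 < G (L + 1) by omega)]
  calc μ {s ∈ K | ∀ j < L + 1, s j = greedyDigit G (G (L + 1) - 1) j}
      ≤ μ (A (G (L + 1) - 1)) := MeasureTheory.measure_mono hsubT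
    _ ≤ (G (L + 1) : ENNReal)⁻¹ := by
        rw [ENNReal.le_inv_iff_mul_le, mul_comm]
        exact hcount
end
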